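/- arXiv:math/0605490 — 10 statements merged into one kernel-verified Lean document; each statement's English description precedes it below -/
import Mathlib

section
/- The sequence P*_n is submultiplicative: for all integers n₁, n₂ ≥ 1, P*_{n₁+n₂} ≤ P*_{n₁} · P*_{n₂}. Consequently, the limit of (P*_n)^{1/n} as n → ∞ exists and equals inf_{n ≥ 1} (P*_n)^{1/n}. -/
/-- `ω₂` is a *simple reduction* of `ω₁`: it is obtained from `ω₁` by interchanging two
adjacent entries `ω₁ i > ω₁ (i+1)`. -/
def IsSimpleReduction {n : ℕ} (ω₁ ω₂ : Equiv.Perm (Fin n)) : Prop :=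
  ∃ i j : Fin n, (i : ℕ) + 1 = (j : ℕ) ∧ ω₁ j < ω₁ i ∧ ω₂ = ω₁ * Equiv.swap i j

/-- Weak Bruhat order: `π ⪯ σ` iff there is a chain of simple reductions from `σ` down to `π`. -/
def WeakLE {n : ℕ} (π σ : Equiv.Perm (Fin n)) : Prop :=
  Relation.ReflTransGen IsSimpleReduction σ π

/-- `P*_n`: the probability that two independent uniformly random permutations of `[n]`
are comparable (`π ⪯ σ`) in the weak Bruhat order. -/
noncomputable def Pstar (n : ℕ) : ℝ :=
  (Nat.card {p : Equiv.Perm (Fin n) × Equiv.Perm (Fin n) // WeakLE p.1 p.2} : ℝ) /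
    (Nat.factorial n) ^ 2

open Equiv Finset
set_option linter.deprecated false

namespace WB

variable {n : ℕ}

/-- The set of value-inversions of a permutation. -/
def vinv (w : Perm (Fin n)) : Finset (Fin n × Fin n) :=
  Finset.univ.filter fun p => p.1 < p.2 ∧ w⁻¹ p.2 < w⁻¹ p.1

lemma mem_vinv {w : Perm (Fin n)} {p : Fin n × Fin n} :
    p ∈ vinv w ↔ p.1 < p.2 ∧ w⁻¹ p.2 < w⁻¹ p.1 := by
  simp [vinv]

lemma swap_adj_lt {i j p q : Fin n} (hij : (i : ℕ) + 1 = j) (hpq : p < q)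
    (hne : ¬(p = i ∧ q = j)) : Equiv.swap i j p < Equiv.swap i j q := by
  have hiv : (i : ℕ) + 1 = (j : ℕ) := hij
  rw [Fin.lt_def] at hpq ⊢
  by_cases hpi : p = i
  · by_cases hqj : q = j
    · exact absurd ⟨hpi, hqj⟩ hne
    · have hqi : q ≠ i := by
        intro h; subst h; simp at hpq; omega
      rw [hpi, Equiv.swap_apply_left, Equiv.swap_apply_of_ne_of_ne hqi hqj]
      have h1 : (q : ℕ) ≠ (j : ℕ) := fun h => hqj (Fin.ext h)
      subst hpi; omega
  · by_cases hpj : p = j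
    · have hqi : q ≠ i := by
        intro h; subst h hpj; omega
      have hqj : q ≠ j := by
        intro h; subst h hpj; omega
      rw [hpj, Equiv.swap_apply_right, Equiv.swap_apply_of_ne_of_ne hqi hqj]
      subst hpj; omega
    · by_cases hqi : q = i
      · rw [hqi, Equiv.swap_apply_left, Equiv.swap_apply_of_ne_of_ne hpi hpj]
        subst hqi; omega
      · by_cases hqj : q = j
        · rw [hqj, Equiv.swap_apply_right, Equiv.swap_apply_of_ne_of_ne hpi hpj]
          have h1 : (p : ℕ) ≠ (i : ℕ) := fun h => hpi (Fin.ext h)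
          have h2 : (p : ℕ) ≠ (j : ℕ) := fun h => hpj (Fin.ext h)
          subst hqj; omega
        · rw [Equiv.swap_apply_of_ne_of_ne hpi hpj, Equiv.swap_apply_of_ne_of_ne hqi hqj]
          exact hpq

lemma vinv_mul_swap {σ : Perm (Fin n)} {i j : Fin n} (hij : (i : ℕ) + 1 = j)
    (hd : σ j < σ i) : vinv (σ * Equiv.swap i j) = (vinv σ).erase (σ j, σ i) := by
  have hinv : ∀ v : Fin n, (σ * Equiv.swap i j)⁻¹ v = Equiv.swap i j (σ⁻¹ v) := by
    intro v; simp [mul_inv_rev, Equiv.Perm.mul_apply]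
  have hijlt : i < j := by rw [Fin.lt_def]; omega
  ext ⟨a, b⟩
  simp only [mem_vinv, Finset.mem_erase, hinv, Prod.mk.injEq, ne_eq, not_and]
  constructor
  · rintro ⟨hab, hlt⟩
    have hba : σ⁻¹ b < σ⁻¹ a := by
      by_contra hcon
      push_neg at hcon
      rcases lt_or_eq_of_le hcon with h | h
      · by_cases hc : σ⁻¹ a = i ∧ σ⁻¹ b = j
        · obtain ⟨h1, h2⟩ := hc
          have : a = σ i := by rw [← h1]; simp
          have hb : b = σ j := by rw [← h2]; simp
          subst this hb
          exact absurd hab (not_lt.mpr hd.le)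
        · exact absurd (swap_adj_lt hij h hc) (not_lt.mpr hlt.le)
      · have : a = b := by
          have := congrArg σ h; simpa using this
        exact absurd this (ne_of_lt hab)
    refine ⟨?_, hab, hba⟩
    intro haj hbi
    subst haj; subst hbi
    simp only [Perm.inv_def, Equiv.symm_apply_apply] at hlt
    rw [Equiv.swap_apply_left, Equiv.swap_apply_right] at hlt
    exact absurd hijlt (not_lt.mpr hlt.le)
  · rintro ⟨hne, hab, hba⟩
    refine ⟨hab, ?_⟩
    apply swap_adj_lt hij hba
    rintro ⟨h1, h2⟩
    have haj : a = σ j := by rw [← h2]; simp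
    have hbi : b = σ i := by rw [← h1]; simp
    exact hne haj hbi

lemma descent_mem_vinv {σ : Perm (Fin n)} {i j : Fin n} (hij : (i : ℕ) + 1 = j)
    (hd : σ j < σ i) : (σ j, σ i) ∈ vinv σ := by
  rw [mem_vinv]
  refine ⟨hd, ?_⟩
  simp only [Perm.inv_def, Equiv.symm_apply_apply]
  rw [Fin.lt_def]; omega

lemma vinv_subset_of_weakLE {π σ : Perm (Fin n)} (h : WeakLE π σ) : vinv π ⊆ vinv σ := by
  induction h with
  | refl => exact Finset.Subset.refl _
  | tail _ hred ih =>
    rename_i b c _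
    obtain ⟨i, j, hij, hd, rfl⟩ := hred
    refine subset_trans ?_ ih
    rw [vinv_mul_swap hij hd]
    exact Finset.erase_subset _ _

lemma eq_of_vinv_eq {π σ : Perm (Fin n)} (h : vinv π = vinv σ) : π = σ := by
  have key : ∀ a b : Fin n, π⁻¹ a < π⁻¹ b → σ⁻¹ a < σ⁻¹ b := by
    intro a b hab
    rcases lt_trichotomy a b with hlt | heq | hgt
    · -- (a,b) pair
      have hmem := h ▸ (mem_vinv (w := π) (p := (a, b)))
      by_contra hcon
      push_neg at hcon
      rcases lt_or_eq_of_le hcon with hc | hc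
      · have : (a, b) ∈ vinv σ := mem_vinv.mpr ⟨hlt, by simpa using hc⟩
        rw [← h, mem_vinv] at this
        exact absurd hab (not_lt.mpr this.2.le)
      · have : a = b := by simpa using congrArg σ hc.symm
        exact absurd this (ne_of_lt hlt)
    · subst heq; exact absurd hab (lt_irrefl _)
    · have : (b, a) ∈ vinv π := mem_vinv.mpr ⟨hgt, hab⟩
      rw [h, mem_vinv] at this
      exact this.2
  have hmono : StrictMono fun x => σ⁻¹ (π x) := by
    intro x y hxy
    apply key
    simpa using hxy
  have hid : (fun x => σ⁻¹ (π x)) = id := by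
    have hrange : Set.range (fun x => σ⁻¹ (π x)) = Set.range (id : Fin n → Fin n) := by
      simp only [Set.range_id]
      exact Set.range_eq_univ.mpr fun y => ⟨π⁻¹ (σ y), by simp⟩
    exact (hmono.range_inj strictMono_id).mp hrange
  ext x
  have h1 := congrFun hid x
  simp only [id_eq] at h1
  have h2 := congrArg σ h1
  simp only [Perm.inv_def, Equiv.apply_symm_apply] at h2
  exact congrArg Fin.val h2

lemma exists_descent_aux {π σ : Perm (Fin n)} (hsub : vinv π ⊆ vinv σ) :
    ∀ g : ℕ, ∀ a b : Fin n, (a, b) ∈ vinv σ → (a, b) ∉ vinv π →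
      ((σ⁻¹ a : ℕ) - (σ⁻¹ b : ℕ)) ≤ g →
      ∃ i j : Fin n, (i : ℕ) + 1 = j ∧ σ j < σ i ∧ (σ j, σ i) ∉ vinv π := by
  intro g
  induction g with
  | zero =>
    intro a b hmem hnot hg
    have h2 : σ⁻¹ b < σ⁻¹ a := (mem_vinv.mp hmem).2
    rw [Fin.lt_def] at h2
    omega
  | succ g ih =>
    intro a b hmem hnot hg
    rw [mem_vinv] at hmem
    obtain ⟨hab, hpos⟩ := hmem
    have hposv : (σ⁻¹ b : ℕ) < (σ⁻¹ a : ℕ) := hpos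
    by_cases hg' : (σ⁻¹ a : ℕ) - (σ⁻¹ b : ℕ) ≤ g
    · exact ih a b (mem_vinv.mpr ⟨hab, hpos⟩) hnot hg'
    by_cases h1 : (σ⁻¹ b : ℕ) + 1 = (σ⁻¹ a : ℕ)
    · refine ⟨σ⁻¹ b, σ⁻¹ a, h1, ?_, ?_⟩
      · simpa using hab
      · simpa using hnot
    · have hlt : (σ⁻¹ b : ℕ) + 1 < (σ⁻¹ a : ℕ) := by omega
      have hg1 : 1 ≤ g := by omega
      have hbnd : (σ⁻¹ b : ℕ) + 1 < n := lt_trans hlt (σ⁻¹ a).isLt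
      set j' : Fin n := ⟨(σ⁻¹ b : ℕ) + 1, hbnd⟩ with hj'
      set c := σ j' with hc
      have hqc : σ⁻¹ c = j' := by rw [hc]; simp
      rcases lt_trichotomy c a with hca | hca | hca
      · -- c < a < b
        have hna : (c, a) ∉ vinv π := by
          intro hmem'
          have : (c, a) ∈ vinv σ := hsub hmem'
          rw [mem_vinv] at this
          have h2 := this.2
          rw [hqc, Fin.lt_def] at h2
          simp only [hj'] at h2
          omega
        have hcb : c < b := lt_trans hca hab
        have hmemcb : (c, b) ∈ vinv σ := by
          rw [mem_vinv]
          refine ⟨hcb, ?_⟩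
          rw [hqc, Fin.lt_def]
          simp [hj']
        by_cases hp : (c, b) ∈ vinv π
        · exfalso
          rw [mem_vinv] at hp hna
          push_neg at hna
          have h3 := hna hca
          apply hnot
          rw [mem_vinv]
          exact ⟨hab, lt_of_lt_of_le hp.2 h3⟩
        · apply ih c b hmemcb hp
          rw [hqc]
          simp only [hj']
          omega
      · exfalso
        rw [hca] at hqc
        have : (σ⁻¹ a : ℕ) = (σ⁻¹ b : ℕ) + 1 := congrArg Fin.val hqc
        omega
      · -- a < c
        have hmemac : (a, c) ∈ vinv σ := by
          rw [mem_vinv]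
          refine ⟨hca, ?_⟩
          rw [hqc, Fin.lt_def]
          simp only [hj']
          omega
        by_cases hp : (a, c) ∈ vinv π
        · rcases lt_trichotomy c b with hcb | hcb | hcb
          · have hmemcb : (c, b) ∈ vinv σ := by
              rw [mem_vinv]
              refine ⟨hcb, ?_⟩
              rw [hqc, Fin.lt_def]
              simp [hj']
            by_cases hp2 : (c, b) ∈ vinv π
            · exfalso
              rw [mem_vinv] at hp hp2
              apply hnot
              rw [mem_vinv]
              exact ⟨hab, lt_trans hp2.2 hp.2⟩
            · apply ih c b hmemcb hp2
              rw [hqc]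
              simp only [hj']
              omega
          · exfalso
            rw [hcb] at hqc
            have : (σ⁻¹ b : ℕ) = (σ⁻¹ b : ℕ) + 1 := congrArg Fin.val hqc
            omega
          · exfalso
            have hnbc : (b, c) ∉ vinv π := by
              intro hmem'
              have : (b, c) ∈ vinv σ := hsub hmem'
              rw [mem_vinv] at this
              have h2 := this.2
              rw [hqc, Fin.lt_def] at h2
              simp only [hj'] at h2
              omega
            rw [mem_vinv] at hp hnbc
            push_neg at hnbc
            have h3 := hnbc hcb
            apply hnot
            rw [mem_vinv]
            exact ⟨hab, lt_of_le_of_lt h3 hp.2⟩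
        · apply ih a c hmemac hp
          rw [hqc]
          simp only [hj']
          omega

lemma weakLE_of_vinv_subset_aux :
    ∀ N : ℕ, ∀ σ π : Perm (Fin n), (vinv σ).card ≤ N → vinv π ⊆ vinv σ → WeakLE π σ := by
  intro N
  induction N with
  | zero =>
    intro σ π hcard hsub
    have hσ : vinv σ = ∅ := Finset.card_eq_zero.mp (Nat.le_zero.mp hcard)
    have hπ : vinv π = ∅ := Finset.subset_empty.mp (hσ ▸ hsub)
    have : π = σ := eq_of_vinv_eq (by rw [hπ, hσ])
    rw [this]
    exact Relation.ReflTransGen.refl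
  | succ N ih =>
    intro σ π hcard hsub
    by_cases heq : π = σ
    · rw [heq]
      exact Relation.ReflTransGen.refl
    · have hne : vinv π ≠ vinv σ := fun h => heq (eq_of_vinv_eq h)
      have hex : ∃ x ∈ vinv σ, x ∉ vinv π := by
        by_contra h
        push_neg at h
        exact hne (Finset.Subset.antisymm hsub h)
      obtain ⟨⟨a, b⟩, hmem, hnot⟩ := hex
      obtain ⟨i, j, hij, hd, hnp⟩ :=
        exists_descent_aux hsub ((σ⁻¹ a : ℕ) - (σ⁻¹ b : ℕ)) a b hmem hnot le_rfl
      have hred : IsSimpleReduction σ (σ * Equiv.swap i j) := ⟨i, j, hij, hd, rfl⟩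
      have hv : vinv (σ * Equiv.swap i j) = (vinv σ).erase (σ j, σ i) := vinv_mul_swap hij hd
      have hsub' : vinv π ⊆ vinv (σ * Equiv.swap i j) := by
        rw [hv]; exact Finset.subset_erase.mpr ⟨hsub, hnp⟩
      have hcard' : (vinv (σ * Equiv.swap i j)).card ≤ N := by
        rw [hv]
        have h1 := Finset.card_erase_of_mem (descent_mem_vinv hij hd)
        have h2 : 1 ≤ (vinv σ).card := Finset.card_pos.mpr ⟨_, descent_mem_vinv hij hd⟩
        omega
      exact Relation.ReflTransGen.head hred (ih _ π hcard' hsub')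

lemma weakLE_iff {π σ : Perm (Fin n)} : WeakLE π σ ↔ vinv π ⊆ vinv σ :=
  ⟨vinv_subset_of_weakLE, fun h => weakLE_of_vinv_subset_aux (vinv σ).card σ π le_rfl h⟩
section Patterns

variable {n1 n2 : ℕ}

def lowset (w : Perm (Fin (n1 + n2))) : Finset (Fin (n1 + n2)) :=
  Finset.univ.image fun a : Fin n1 => w⁻¹ (Fin.castAdd n2 a)

def highset (w : Perm (Fin (n1 + n2))) : Finset (Fin (n1 + n2)) :=
  Finset.univ.image fun a : Fin n2 => w⁻¹ (Fin.natAdd n1 a)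

lemma card_lowset (w : Perm (Fin (n1 + n2))) : (lowset w).card = n1 := by
  rw [lowset, Finset.card_image_of_injective _
    (fun a b h => Fin.castAdd_injective _ _ ((Equiv.injective _) h)), Finset.card_univ,
    Fintype.card_fin]

lemma card_highset (w : Perm (Fin (n1 + n2))) : (highset w).card = n2 := by
  rw [highset, Finset.card_image_of_injective _
    (fun a b h => (Fin.strictMono_natAdd _).injective ((Equiv.injective _) h)), Finset.card_univ,
    Fintype.card_fin]

lemma mem_lowset {w : Perm (Fin (n1 + n2))} {p : Fin (n1 + n2)} :
    p ∈ lowset w ↔ (w p : ℕ) < n1 := by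
  simp only [lowset, Finset.mem_image, Finset.mem_univ, true_and]
  constructor
  · rintro ⟨a, rfl⟩
    simp
  · intro h
    refine ⟨⟨(w p : ℕ), h⟩, ?_⟩
    have heq : Fin.castAdd n2 ⟨(w p : ℕ), h⟩ = w p := by
      apply Fin.ext; simp
    rw [heq]; simp

lemma mem_highset {w : Perm (Fin (n1 + n2))} {p : Fin (n1 + n2)} :
    p ∈ highset w ↔ n1 ≤ (w p : ℕ) := by
  simp only [highset, Finset.mem_image, Finset.mem_univ, true_and]
  constructor
  · rintro ⟨a, rfl⟩
    simp
  · intro h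
    refine ⟨⟨(w p : ℕ) - n1, by have := (w p).isLt; omega⟩, ?_⟩
    have heq : Fin.natAdd n1 ⟨(w p : ℕ) - n1, by have := (w p).isLt; omega⟩ = w p := by
      apply Fin.ext; simp; omega
    rw [heq]; simp

lemma highset_eq_compl (w : Perm (Fin (n1 + n2))) : highset w = (lowset w)ᶜ := by
  ext p
  simp [mem_highset, mem_lowset, not_lt]

lemma castAdd_mem_lowset (w : Perm (Fin (n1 + n2))) (a : Fin n1) :
    w⁻¹ (Fin.castAdd n2 a) ∈ lowset w :=
  Finset.mem_image.mpr ⟨a, Finset.mem_univ _, rfl⟩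

lemma natAdd_mem_highset (w : Perm (Fin (n1 + n2))) (a : Fin n2) :
    w⁻¹ (Fin.natAdd n1 a) ∈ highset w :=
  Finset.mem_image.mpr ⟨a, Finset.mem_univ _, rfl⟩

noncomputable def q1 (w : Perm (Fin (n1 + n2))) : Fin n1 → Fin n1 := fun a =>
  ((lowset w).orderIsoOfFin (card_lowset w)).symm ⟨_, castAdd_mem_lowset w a⟩

noncomputable def q2 (w : Perm (Fin (n1 + n2))) : Fin n2 → Fin n2 := fun a =>
  ((highset w).orderIsoOfFin (card_highset w)).symm ⟨_, natAdd_mem_highset w a⟩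

lemma q1_lt_iff {w : Perm (Fin (n1 + n2))} {a b : Fin n1} :
    q1 w a < q1 w b ↔ w⁻¹ (Fin.castAdd n2 a) < w⁻¹ (Fin.castAdd n2 b) := by
  rw [q1, q1, OrderIso.lt_iff_lt]
  rfl

lemma q2_lt_iff {w : Perm (Fin (n1 + n2))} {a b : Fin n2} :
    q2 w a < q2 w b ↔ w⁻¹ (Fin.natAdd n1 a) < w⁻¹ (Fin.natAdd n1 b) := by
  rw [q2, q2, OrderIso.lt_iff_lt]
  rfl

lemma q1_bijective (w : Perm (Fin (n1 + n2))) : Function.Bijective (q1 w) := by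
  rw [← Finite.injective_iff_bijective]
  intro a b h
  have h2 := congrArg ((lowset w).orderIsoOfFin (card_lowset w)) h
  simp only [q1, OrderIso.apply_symm_apply] at h2
  have h3 : w⁻¹ (Fin.castAdd n2 a) = w⁻¹ (Fin.castAdd n2 b) := congrArg Subtype.val h2
  exact Fin.castAdd_injective _ _ ((Equiv.injective _) h3)

lemma q2_bijective (w : Perm (Fin (n1 + n2))) : Function.Bijective (q2 w) := by
  rw [← Finite.injective_iff_bijective]
  intro a b h
  have h2 := congrArg ((highset w).orderIsoOfFin (card_highset w)) h
  simp only [q2, OrderIso.apply_symm_apply] at h2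
  have h3 : w⁻¹ (Fin.natAdd n1 a) = w⁻¹ (Fin.natAdd n1 b) := congrArg Subtype.val h2
  exact (Fin.strictMono_natAdd _).injective ((Equiv.injective _) h3)

noncomputable def pat1 (w : Perm (Fin (n1 + n2))) : Perm (Fin n1) :=
  (Equiv.ofBijective (q1 w) (q1_bijective w)).symm

noncomputable def pat2 (w : Perm (Fin (n1 + n2))) : Perm (Fin n2) :=
  (Equiv.ofBijective (q2 w) (q2_bijective w)).symm

lemma pat1_inv_apply (w : Perm (Fin (n1 + n2))) (a : Fin n1) : (pat1 w)⁻¹ a = q1 w a := rfl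

lemma pat2_inv_apply (w : Perm (Fin (n1 + n2))) (a : Fin n2) : (pat2 w)⁻¹ a = q2 w a := rfl

lemma mem_vinv_pat1 {w : Perm (Fin (n1 + n2))} {a b : Fin n1} :
    (a, b) ∈ vinv (pat1 w) ↔ (Fin.castAdd n2 a, Fin.castAdd n2 b) ∈ vinv w := by
  rw [mem_vinv, mem_vinv]
  constructor
  · rintro ⟨hab, hlt⟩
    rw [pat1_inv_apply, pat1_inv_apply, q1_lt_iff] at hlt
    exact ⟨(Fin.strictMono_castAdd n2) hab, hlt⟩
  · rintro ⟨hab, hlt⟩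
    refine ⟨(Fin.strictMono_castAdd n2).lt_iff_lt.mp hab, ?_⟩
    rw [pat1_inv_apply, pat1_inv_apply, q1_lt_iff]
    exact hlt

lemma mem_vinv_pat2 {w : Perm (Fin (n1 + n2))} {a b : Fin n2} :
    (a, b) ∈ vinv (pat2 w) ↔ (Fin.natAdd n1 a, Fin.natAdd n1 b) ∈ vinv w := by
  rw [mem_vinv, mem_vinv]
  constructor
  · rintro ⟨hab, hlt⟩
    rw [pat2_inv_apply, pat2_inv_apply, q2_lt_iff] at hlt
    exact ⟨(Fin.strictMono_natAdd n1) hab, hlt⟩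
  · rintro ⟨hab, hlt⟩
    refine ⟨(Fin.strictMono_natAdd n1).lt_iff_lt.mp hab, ?_⟩
    rw [pat2_inv_apply, pat2_inv_apply, q2_lt_iff]
    exact hlt

lemma vinv_pat1_subset {v w : Perm (Fin (n1 + n2))} (h : vinv v ⊆ vinv w) :
    vinv (pat1 v) ⊆ vinv (pat1 w) := by
  rintro ⟨a, b⟩ hmem
  exact mem_vinv_pat1.mpr (h (mem_vinv_pat1.mp hmem))

lemma vinv_pat2_subset {v w : Perm (Fin (n1 + n2))} (h : vinv v ⊆ vinv w) :
    vinv (pat2 v) ⊆ vinv (pat2 w) := by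
  rintro ⟨a, b⟩ hmem
  exact mem_vinv_pat2.mpr (h (mem_vinv_pat2.mp hmem))

lemma inv_castAdd (w : Perm (Fin (n1 + n2))) (a : Fin n1) :
    w⁻¹ (Fin.castAdd n2 a) = ((lowset w).orderIsoOfFin (card_lowset w) (q1 w a) : Fin (n1 + n2)) := by
  simp [q1]

lemma inv_natAdd (w : Perm (Fin (n1 + n2))) (a : Fin n2) :
    w⁻¹ (Fin.natAdd n1 a) = ((highset w).orderIsoOfFin (card_highset w) (q2 w a) : Fin (n1 + n2)) := by
  simp [q2]

lemma orderIsoOfFin_congr {α : Type*} [LinearOrder α] {s t : Finset α} {k : ℕ}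
    (h : s = t) (hs : s.card = k) (ht : t.card = k) (x : Fin k) :
    (s.orderIsoOfFin hs x : α) = (t.orderIsoOfFin ht x : α) := by
  subst h
  rfl

lemma pattern_inj {v w : Perm (Fin (n1 + n2))} (h1 : pat1 v = pat1 w) (h2 : pat2 v = pat2 w)
    (hl : lowset v = lowset w) : v = w := by
  have hh : highset v = highset w := by rw [highset_eq_compl, highset_eq_compl, hl]
  have hq1 : ∀ a, q1 v a = q1 w a := by
    intro a
    rw [← pat1_inv_apply, ← pat1_inv_apply, h1]
  have hq2 : ∀ a, q2 v a = q2 w a := by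
    intro a
    rw [← pat2_inv_apply, ← pat2_inv_apply, h2]
  have key : ∀ x, v⁻¹ x = w⁻¹ x := by
    intro x
    induction x using Fin.addCases with
    | left a =>
      rw [inv_castAdd v a, inv_castAdd w a, hq1 a]
      exact orderIsoOfFin_congr hl _ _ _
    | right a =>
      rw [inv_natAdd v a, inv_natAdd w a, hq2 a]
      exact orderIsoOfFin_congr hh _ _ _
  exact inv_injective (Equiv.ext key)

end Patterns
section Counting

instance cpNonempty (n : ℕ) : Nonempty {p : Perm (Fin n) × Perm (Fin n) // WeakLE p.1 p.2} :=
  ⟨⟨(1, 1), Relation.ReflTransGen.refl⟩⟩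

lemma comparable_card_bound (n1 n2 : ℕ) :
    Nat.card {p : Perm (Fin (n1 + n2)) × Perm (Fin (n1 + n2)) // WeakLE p.1 p.2} ≤
      Nat.card {p : Perm (Fin n1) × Perm (Fin n1) // WeakLE p.1 p.2} *
      Nat.card {p : Perm (Fin n2) × Perm (Fin n2) // WeakLE p.1 p.2} *
      ((n1 + n2).choose n1) ^ 2 := by
  classical
  let T := ({p : Perm (Fin n1) × Perm (Fin n1) // WeakLE p.1 p.2} ×
    {p : Perm (Fin n2) × Perm (Fin n2) // WeakLE p.1 p.2} ×
    {s : Finset (Fin (n1 + n2)) // s.card = n1} × {s : Finset (Fin (n1 + n2)) // s.card = n1})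
  let F : {p : Perm (Fin (n1 + n2)) × Perm (Fin (n1 + n2)) // WeakLE p.1 p.2} → T := fun x =>
    ⟨⟨(pat1 x.1.1, pat1 x.1.2), weakLE_iff.mpr (vinv_pat1_subset (weakLE_iff.mp x.2))⟩,
     ⟨(pat2 x.1.1, pat2 x.1.2), weakLE_iff.mpr (vinv_pat2_subset (weakLE_iff.mp x.2))⟩,
     ⟨lowset x.1.1, card_lowset _⟩, ⟨lowset x.1.2, card_lowset _⟩⟩
  have hinj : Function.Injective F := by
    rintro ⟨⟨π, σ⟩, h⟩ ⟨⟨π', σ'⟩, h'⟩ heq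
    apply Subtype.ext
    have h1 : pat1 π = pat1 π' := congrArg (fun t : T => t.1.1.1) heq
    have h2 : pat1 σ = pat1 σ' := congrArg (fun t : T => t.1.1.2) heq
    have h3 : pat2 π = pat2 π' := congrArg (fun t : T => t.2.1.1.1) heq
    have h4 : pat2 σ = pat2 σ' := congrArg (fun t : T => t.2.1.1.2) heq
    have h5 : lowset π = lowset π' := congrArg (fun t : T => t.2.2.1.1) heq
    have h6 : lowset σ = lowset σ' := congrArg (fun t : T => t.2.2.2.1) heq
    exact Prod.ext (pattern_inj h1 h3 h5) (pattern_inj h2 h4 h6)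
  have hcard := Nat.card_le_card_of_injective F hinj
  have hT : Nat.card T =
      Nat.card {p : Perm (Fin n1) × Perm (Fin n1) // WeakLE p.1 p.2} *
      Nat.card {p : Perm (Fin n2) × Perm (Fin n2) // WeakLE p.1 p.2} *
      ((n1 + n2).choose n1) ^ 2 := by
    rw [show T = _ from rfl, Nat.card_prod, Nat.card_prod, Nat.card_prod]
    have hs : Nat.card {s : Finset (Fin (n1 + n2)) // s.card = n1} = (n1 + n2).choose n1 := by
      rw [Nat.card_eq_fintype_card]
      rw [Fintype.card_finset_len, Fintype.card_fin]
    rw [hs]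
    ring
  rw [hT] at hcard
  exact hcard

lemma card_comparable_pos (n : ℕ) :
    0 < Nat.card {p : Perm (Fin n) × Perm (Fin n) // WeakLE p.1 p.2} :=
  Nat.card_pos

lemma card_comparable_le (n : ℕ) :
    Nat.card {p : Perm (Fin n) × Perm (Fin n) // WeakLE p.1 p.2} ≤ n.factorial ^ 2 := by
  have h := Nat.card_le_card_of_injective
    (Subtype.val : {p : Perm (Fin n) × Perm (Fin n) // WeakLE p.1 p.2} →
      Perm (Fin n) × Perm (Fin n)) Subtype.val_injective
  have hp : Nat.card (Perm (Fin n)) = n.factorial := by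
    rw [Nat.card_eq_fintype_card, Fintype.card_perm, Fintype.card_fin]
  rwa [Nat.card_prod, hp, ← sq] at h

lemma Pstar_pos (n : ℕ) : 0 < Pstar n := by
  rw [Pstar]
  have h1 := card_comparable_pos n
  have h2 := n.factorial_pos
  positivity

lemma Pstar_le_one (n : ℕ) : Pstar n ≤ 1 := by
  rw [Pstar, div_le_one (by have := n.factorial_pos; positivity)]
  exact_mod_cast card_comparable_le n

lemma Pstar_submul (n1 n2 : ℕ) : Pstar (n1 + n2) ≤ Pstar n1 * Pstar n2 := by
  have hA := comparable_card_bound n1 n2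
  have hfact : (n1 + n2).choose n1 * n1.factorial * n2.factorial = (n1 + n2).factorial := by
    have h := Nat.choose_mul_factorial_mul_factorial (Nat.le_add_right n1 n2)
    simpa [Nat.add_sub_cancel_left] using h
  have hNat : Nat.card {p : Perm (Fin (n1 + n2)) × Perm (Fin (n1 + n2)) // WeakLE p.1 p.2} *
      (n1.factorial * n2.factorial) ^ 2 ≤
      Nat.card {p : Perm (Fin n1) × Perm (Fin n1) // WeakLE p.1 p.2} *
      Nat.card {p : Perm (Fin n2) × Perm (Fin n2) // WeakLE p.1 p.2} *
      ((n1 + n2).factorial) ^ 2 := by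
    calc _ ≤ (Nat.card {p : Perm (Fin n1) × Perm (Fin n1) // WeakLE p.1 p.2} *
          Nat.card {p : Perm (Fin n2) × Perm (Fin n2) // WeakLE p.1 p.2} *
          ((n1 + n2).choose n1) ^ 2) * (n1.factorial * n2.factorial) ^ 2 :=
        Nat.mul_le_mul_right _ hA
      _ = Nat.card {p : Perm (Fin n1) × Perm (Fin n1) // WeakLE p.1 p.2} *
          Nat.card {p : Perm (Fin n2) × Perm (Fin n2) // WeakLE p.1 p.2} *
          ((n1 + n2).choose n1 * n1.factorial * n2.factorial) ^ 2 := by ring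
      _ = _ := by rw [hfact]
  rw [Pstar, Pstar, Pstar, div_mul_div_comm,
    div_le_div_iff₀ (by have := (n1 + n2).factorial_pos; positivity)
      (by have := n1.factorial_pos; have := n2.factorial_pos; positivity)]
  have hcast := (Nat.cast_le (α := ℝ)).mpr hNat
  push_cast at hcast ⊢
  nlinarith [hcast]

end Counting
section Fekete

open Filter Topology

lemma Pstar_le_pow (m : ℕ) : ∀ q r : ℕ, Pstar (m * (q + 1) + r) ≤ Pstar m ^ (q + 1) := by
  intro q
  induction q with
  | zero =>
    intro r
    calc Pstar (m * 1 + r) = Pstar (m + r) := by rw [mul_one]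
      _ ≤ Pstar m * Pstar r := Pstar_submul m r
      _ ≤ Pstar m * 1 := mul_le_mul_of_nonneg_left (Pstar_le_one r) (Pstar_pos m).le
      _ = Pstar m ^ 1 := by rw [mul_one, pow_one]
  | succ q ih =>
    intro r
    have hsplit : m * (q + 1 + 1) + r = m + (m * (q + 1) + r) := by ring
    rw [hsplit]
    calc Pstar (m + (m * (q + 1) + r)) ≤ Pstar m * Pstar (m * (q + 1) + r) := Pstar_submul _ _
      _ ≤ Pstar m * Pstar m ^ (q + 1) := mul_le_mul_of_nonneg_left (ih r) (Pstar_pos m).le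
      _ = Pstar m ^ (q + 1 + 1) := by ring

lemma Pstar_le_pow_div {m n : ℕ} (hm : 1 ≤ m) (hn : m ≤ n) :
    Pstar n ≤ Pstar m ^ (n / m) := by
  have hq : 1 ≤ n / m := (Nat.one_le_div_iff hm).mpr hn
  obtain ⟨q, hq'⟩ : ∃ q, n / m = q + 1 := ⟨n / m - 1, by omega⟩
  have hn' : m * (q + 1) + n % m = n := by rw [← hq']; exact Nat.div_add_mod n m
  rw [hq', ← hn']
  exact Pstar_le_pow m q (n % m)

end Fekete
end WB

open Filter Topology WB

theorem weak_bruhat_submultiplicative :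
    (∀ n₁ n₂ : ℕ, 1 ≤ n₁ → 1 ≤ n₂ → Pstar (n₁ + n₂) ≤ Pstar n₁ * Pstar n₂) ∧
    Filter.Tendsto (fun n : ℕ => Pstar n ^ ((1 : ℝ) / (n : ℝ))) Filter.atTop
      (nhds (⨅ n : ℕ, Pstar (n + 1) ^ ((1 : ℝ) / ((n : ℝ) + 1)))) := by
  refine ⟨fun n₁ n₂ _ _ => Pstar_submul n₁ n₂, ?_⟩
  set f : ℕ → ℝ := fun n => Pstar n ^ ((1 : ℝ) / (n : ℝ)) with hf
  set L : ℝ := ⨅ n : ℕ, Pstar (n + 1) ^ ((1 : ℝ) / ((n : ℝ) + 1)) with hL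
  have hfeq : ∀ n : ℕ, Pstar (n + 1) ^ ((1 : ℝ) / ((n : ℝ) + 1)) = f (n + 1) := by
    intro n
    rw [hf]
    push_cast
    ring_nf
  have hbdd : BddBelow (Set.range fun n : ℕ => Pstar (n + 1) ^ ((1 : ℝ) / ((n : ℝ) + 1))) := by
    refine ⟨0, ?_⟩
    rintro x ⟨n, rfl⟩
    have := Pstar_pos (n + 1)
    positivity
  have hLle : ∀ n : ℕ, 1 ≤ n → L ≤ f n := by
    intro n hn
    obtain ⟨k, rfl⟩ : ∃ k, n = k + 1 := ⟨n - 1, by omega⟩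
    rw [← hfeq k]
    exact ciInf_le hbdd k
  rw [Metric.tendsto_atTop]
  intro ε hε
  obtain ⟨m₀, hm₀⟩ := exists_lt_of_ciInf_lt
    (show (⨅ n : ℕ, Pstar (n + 1) ^ ((1 : ℝ) / ((n : ℝ) + 1))) < L + ε / 2 by
      rw [← hL]; linarith)
  set m := m₀ + 1 with hm
  have hm1 : 1 ≤ m := Nat.le_add_left 1 m₀
  have hfm : f m < L + ε / 2 := by rw [← hfeq m₀]; exact hm₀
  have hPm := Pstar_pos m
  -- the exponent sequence
  have hr0 : Tendsto (fun n : ℕ => ((n % m : ℕ) : ℝ) / ((m : ℝ) * (n : ℝ))) atTop (nhds 0) := by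
    apply squeeze_zero (fun n => by positivity) (g := fun n : ℕ => 1 / (n : ℝ))
    · intro n
      rcases Nat.eq_zero_or_pos n with rfl | hn
      · simp
      · have hmn : (0 : ℝ) < (m : ℝ) * (n : ℝ) := by
          have : (0:ℝ) < (m:ℝ) := by exact_mod_cast hm1
          have : (0:ℝ) < (n:ℝ) := by exact_mod_cast hn
          positivity
        have h1 : ((n % m : ℕ) : ℝ) ≤ (m : ℝ) := by
          exact_mod_cast (Nat.mod_lt n hm1).le
        calc ((n % m : ℕ) : ℝ) / ((m : ℝ) * (n : ℝ)) ≤ (m : ℝ) / ((m : ℝ) * (n : ℝ)) :=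
              div_le_div_of_nonneg_right h1 hmn.le
          _ = 1 / (n : ℝ) := by
              rw [eq_div_iff (by exact_mod_cast hn.ne' : ((n:ℝ)) ≠ 0)]
              field_simp
    · exact tendsto_one_div_atTop_nhds_zero_nat
  have hexp : Tendsto (fun n : ℕ => ((n / m : ℕ) : ℝ) / (n : ℝ)) atTop (nhds (1 / (m : ℝ))) := by
    have heq : ∀ᶠ n : ℕ in atTop, 1 / (m : ℝ) - ((n % m : ℕ) : ℝ) / ((m : ℝ) * (n : ℝ)) =
        ((n / m : ℕ) : ℝ) / (n : ℝ) := by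
      filter_upwards [eventually_ge_atTop 1] with n hn
      have hkey : (m : ℝ) * ((n / m : ℕ) : ℝ) + ((n % m : ℕ) : ℝ) = (n : ℝ) := by
        exact_mod_cast Nat.div_add_mod n m
      have hmne : (m : ℝ) ≠ 0 := by
        have : (0:ℝ) < (m:ℝ) := by exact_mod_cast hm1
        linarith
      have hnne : (n : ℝ) ≠ 0 := by
        have : (0:ℝ) < (n:ℝ) := by exact_mod_cast hn
        linarith
      field_simp
      nlinarith [hkey]
    have := (tendsto_const_nhds (x := 1 / (m : ℝ)) (f := atTop)).sub hr0
    rw [sub_zero] at this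
    exact this.congr' heq
  -- the dominating sequence
  have hgt : Tendsto (fun n : ℕ => Pstar m ^ (((n / m : ℕ) : ℝ) / (n : ℝ))) atTop
      (nhds (Pstar m ^ ((1 : ℝ) / (m : ℝ)))) := by
    have hcont : Tendsto (fun n : ℕ => Real.exp (Real.log (Pstar m) * (((n / m : ℕ) : ℝ) / (n : ℝ))))
        atTop (nhds (Real.exp (Real.log (Pstar m) * (1 / (m : ℝ))))) :=
      (Real.continuous_exp.tendsto _).comp (tendsto_const_nhds.mul hexp)
    have heq : ∀ n : ℕ, Real.exp (Real.log (Pstar m) * (((n / m : ℕ) : ℝ) / (n : ℝ))) =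
        Pstar m ^ (((n / m : ℕ) : ℝ) / (n : ℝ)) := fun n =>
      (Real.rpow_def_of_pos hPm _).symm
    have heq2 : Real.exp (Real.log (Pstar m) * (1 / (m : ℝ))) = Pstar m ^ ((1 : ℝ) / (m : ℝ)) :=
      (Real.rpow_def_of_pos hPm _).symm
    rw [← heq2]
    exact hcont.congr heq
  have hbound : ∀ n : ℕ, m ≤ n → f n ≤ Pstar m ^ (((n / m : ℕ) : ℝ) / (n : ℝ)) := by
    intro n hn
    have h1 : Pstar n ≤ Pstar m ^ (n / m) := Pstar_le_pow_div hm1 hn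
    have h2 : f n ≤ (Pstar m ^ (n / m : ℕ)) ^ ((1 : ℝ) / (n : ℝ)) := by
      rw [hf]
      exact Real.rpow_le_rpow (Pstar_pos n).le h1 (by positivity)
    calc f n ≤ (Pstar m ^ (n / m : ℕ)) ^ ((1 : ℝ) / (n : ℝ)) := h2
      _ = (Pstar m ^ (((n / m : ℕ)) : ℝ)) ^ ((1 : ℝ) / (n : ℝ)) := by
          rw [Real.rpow_natCast]
      _ = Pstar m ^ ((((n / m : ℕ)) : ℝ) * ((1 : ℝ) / (n : ℝ))) := by
          rw [← Real.rpow_mul hPm.le]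
      _ = Pstar m ^ (((n / m : ℕ) : ℝ) / (n : ℝ)) := by
          rw [mul_one_div]
  have hfin : ∀ᶠ n : ℕ in atTop, Pstar m ^ (((n / m : ℕ) : ℝ) / (n : ℝ)) < L + ε :=
    hgt.eventually_lt_const (by
      have : Pstar m ^ ((1 : ℝ) / (m : ℝ)) = f m := rfl
      rw [this]
      linarith)
  obtain ⟨N, hN⟩ := eventually_atTop.mp hfin
  refine ⟨max N (max m 1), fun n hn => ?_⟩
  have hn1 : 1 ≤ n := le_trans (le_max_of_le_right (le_max_right m 1)) hn
  have hnm : m ≤ n := le_trans (le_max_of_le_right (le_max_left m 1)) hn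
  have hnN : N ≤ n := le_trans (le_max_left _ _) hn
  rw [Real.dist_eq, abs_lt]
  constructor
  · have := hLle n hn1
    linarith
  · have h1 := hbound n hnm
    have h2 := hN n hnN
    linarith
end

section
/- Let n ≥ 1, k ∈ [n], and π, σ ∈ S_n. Suppose (a) for every r ∈ [k] and every c ∈ [n], #{t ∈ [n] : t ≥ c and π(t) > n − r} ≥ #{t ∈ [n] : t ≥ c and σ(t) > n − r} (every northeastern submatrix of the superimposed permutation matrices with at most k rows contains at least as many crosses as balls), and (b) π^{k*} ≤_M σ^{k*} in S_{n−k}. Then π ≤_M σ. -/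
/-- The `(0,1)`-matrix criterion order on `S_n` (which coincides with the strong Bruhat
order): `π ≤_M σ` iff for every `r, c ∈ [n]` the northeastern submatrix with `r` rows and
columns `c, …, n` contains at least as many crosses (entries of `π`) as balls (entries
of `σ`).  Positions and values are `1`-indexed: the `1`-indexed value of `t : Fin n` is
`(t : ℕ) + 1`. -/
def MatLE {n : ℕ} (π σ : Equiv.Perm (Fin n)) : Prop :=
  ∀ r c : ℕ, r ∈ Finset.Icc 1 n → c ∈ Finset.Icc 1 n →
    (Finset.univ.filter fun t : Fin n => c ≤ (t : ℕ) + 1 ∧ n - r < (σ t : ℕ) + 1).card ≤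
    (Finset.univ.filter fun t : Fin n => c ≤ (t : ℕ) + 1 ∧ n - r < (π t : ℕ) + 1).card

open Finset

/-- Count of elements of `Fin n` with value `< a`. -/
private lemma card_val_lt (n a : ℕ) (ha : a ≤ n) :
    (univ.filter fun v : Fin n => (v : ℕ) < a).card = a := by
  have h : (univ.filter fun v : Fin n => (v : ℕ) < a).card = (Finset.range a).card := by
    apply Finset.card_bij (fun (v : Fin n) _ => (v : ℕ))
    · intro v hv
      simp only [mem_filter, mem_univ, true_and] at hv
      simpa using hv
    · intro u _ v _ h
      exact Fin.ext h
    · intro x hx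
      simp only [Finset.mem_range] at hx
      exact ⟨⟨x, lt_of_lt_of_le hx ha⟩, by simpa using hx, rfl⟩
  rw [h, Finset.card_range]

/-- Count of elements of `Fin n` with value `≥ a`. -/
private lemma card_val_le (n a : ℕ) (ha : a ≤ n) :
    (univ.filter fun v : Fin n => a ≤ (v : ℕ)).card = n - a := by
  have h := Finset.card_filter_add_card_filter_not
    (s := (univ : Finset (Fin n))) (fun v : Fin n => (v : ℕ) < a)
  rw [card_val_lt n a ha] at h
  simp only [not_lt, Finset.card_univ, Fintype.card_fin] at h
  omega

/-- Splitting a filtered count according to an extra predicate. -/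
private lemma card_split {α : Type*} [Fintype α] (p q : α → Prop)
    [DecidablePred p] [DecidablePred q] :
    (univ.filter fun x => p x ∧ q x).card + (univ.filter fun x => p x ∧ ¬ q x).card
      = (univ.filter p).card := by
  rw [← Finset.filter_filter, ← Finset.filter_filter]
  exact Finset.card_filter_add_card_filter_not (s := univ.filter p) q

private lemma card_congr_iff {α : Type*} [Fintype α] (p q : α → Prop)
    [DecidablePred p] [DecidablePred q] (h : ∀ x, p x ↔ q x) :
    (univ.filter p).card = (univ.filter q).card := by
  rw [Finset.filter_congr (fun x _ => h x)]

/-- Reindexing a count over positions by the values of a permutation. -/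
private lemma card_perm {n : ℕ} (π : Equiv.Perm (Fin n)) (p : Fin n → Prop)
    [DecidablePred p] :
    (univ.filter fun t : Fin n => p (π t)).card = (univ.filter p).card := by
  apply Finset.card_bij (fun t _ => π t)
  · intro t ht
    simp only [mem_filter, mem_univ, true_and] at ht ⊢
    exact ht
  · intro a _ b _ h
    exact π.injective h
  · intro v hv
    simp only [mem_filter, mem_univ, true_and] at hv
    exact ⟨π⁻¹ v, by simpa using hv, by simp⟩

/-- Transferring a count over small values of `π` to a count over `Fin (n-k)`. -/
private lemma card_small_bij {n k : ℕ} (π : Equiv.Perm (Fin n))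
    (p : ℕ → ℕ → Prop) [∀ a b : ℕ, Decidable (p a b)] :
    (univ.filter fun t : Fin n => p (t : ℕ) ((π t : Fin n) : ℕ) ∧ ((π t : Fin n) : ℕ) + 1 ≤ n - k).card
      = (univ.filter fun j : Fin (n - k) =>
          p ((π⁻¹ (Fin.castLE (Nat.sub_le n k) j) : Fin n) : ℕ) (j : ℕ)).card := by
  symm
  apply Finset.card_bij (fun j _ => π⁻¹ (Fin.castLE (Nat.sub_le n k) j))
  · intro j hj
    simp only [mem_filter, mem_univ, true_and] at hj ⊢
    have h1 : π (π⁻¹ (Fin.castLE (Nat.sub_le n k) j)) = Fin.castLE (Nat.sub_le n k) j := by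
      simp
    rw [h1]
    refine ⟨by simpa using hj, ?_⟩
    have := j.isLt
    simp only [Fin.coe_castLE]
    omega
  · intro a _ b _ h
    exact Fin.castLE_injective _ ((Equiv.injective π⁻¹) h)
  · intro t ht
    simp only [mem_filter, mem_univ, true_and] at ht
    obtain ⟨hp, hsmall⟩ := ht
    have hlt : ((π t : Fin n) : ℕ) < n - k := by omega
    refine ⟨⟨(π t : Fin n), hlt⟩, ?_, ?_⟩
    · have hcast : Fin.castLE (Nat.sub_le n k) (⟨(π t : Fin n), hlt⟩ : Fin (n - k)) = π t :=
        Fin.ext rfl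
      simp only [mem_filter, mem_univ, true_and, hcast]
      simpa using hp
    · have hcast : Fin.castLE (Nat.sub_le n k) (⟨(π t : Fin n), hlt⟩ : Fin (n - k)) = π t :=
        Fin.ext rfl
      rw [hcast]
      simp

/-- The rank characterization: the position of value `j` in the deleted permutation is the
number of values whose position is smaller. -/
private lemma rank_iff {d n : ℕ} (f : Fin d → Fin n) (pk : Equiv.Perm (Fin d))
    (h : ∀ i j : Fin d, pk⁻¹ i < pk⁻¹ j ↔ f i < f j) (c : ℕ) (j : Fin d) :
    c ≤ (f j : ℕ) + 1 ↔
      (univ.filter fun j' : Fin d => (f j' : ℕ) + 1 < c).card ≤ ((pk⁻¹ j : Fin d) : ℕ) := by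
  have hrank : ((pk⁻¹ j : Fin d) : ℕ)
      = (univ.filter fun j' : Fin d => (f j' : ℕ) < (f j : ℕ)).card := by
    rw [← card_val_lt d ((pk⁻¹ j : Fin d) : ℕ) (le_of_lt (pk⁻¹ j).isLt)]
    apply Finset.card_bij (fun t' _ => pk t')
    · intro t' ht'
      simp only [mem_filter, mem_univ, true_and] at ht' ⊢
      have h0 : pk⁻¹ (pk t') < pk⁻¹ j := by
        rw [Equiv.Perm.inv_def, Equiv.symm_apply_apply]
        exact Fin.lt_def.mpr ht'
      exact Fin.lt_def.mp ((h (pk t') j).mp h0)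
    · intro a _ b _ hab
      exact pk.injective hab
    · intro j' hj'
      simp only [mem_filter, mem_univ, true_and] at hj'
      refine ⟨pk⁻¹ j', ?_, by simp⟩
      simp only [mem_filter, mem_univ, true_and]
      have h0 : pk⁻¹ j' < pk⁻¹ j := (h j' j).mpr (Fin.lt_def.mpr hj')
      have h1 : pk⁻¹ (pk (pk⁻¹ j')) < pk⁻¹ j := by
        rw [Equiv.Perm.inv_def, Equiv.symm_apply_apply]; exact h0
      exact Fin.lt_def.mp (by simpa using h0)
  rw [hrank]
  constructor
  · intro hc
    apply Finset.card_le_card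
    intro j' hj'
    simp only [mem_filter, mem_univ, true_and] at hj' ⊢
    omega
  · intro hm
    by_contra hc
    push_neg at hc
    have hlt : (univ.filter fun j' : Fin d => (f j' : ℕ) < (f j : ℕ)).card
        < (univ.filter fun j' : Fin d => (f j' : ℕ) + 1 < c).card := by
      apply Finset.card_lt_card
      constructor
      · intro j' hj'
        simp only [mem_filter, mem_univ, true_and] at hj' ⊢
        omega
      · intro hsub
        have hjmem : j ∈ univ.filter fun j' : Fin d => (f j' : ℕ) + 1 < c := by
          simp only [mem_filter, mem_univ, true_and]
          omega
        have := hsub hjmem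
        simp only [mem_filter, mem_univ, true_and] at this
        omega
    omega


/-- The main per-permutation computation: the count in the full matrix splits as the
top-`k`-row count plus a count over the deleted permutation, and the auxiliary
column-counting identities. -/
private lemma key_lemma {n k : ℕ} (hkn : k ≤ n) (r c : ℕ)
    (hkr : k < r) (hrn : r ≤ n) (hc1 : 1 ≤ c) (hcn : c ≤ n)
    (e : Equiv.Perm (Fin n)) (ek : Equiv.Perm (Fin (n - k)))
    (hek : ∀ i j : Fin (n - k), ek⁻¹ i < ek⁻¹ j ↔
      e⁻¹ (Fin.castLE (Nat.sub_le n k) i) < e⁻¹ (Fin.castLE (Nat.sub_le n k) j)) :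
    (univ.filter fun t : Fin n => c ≤ (t : ℕ) + 1 ∧ n - r < (e t : ℕ) + 1).card
      = (univ.filter fun t : Fin n => c ≤ (t : ℕ) + 1 ∧ n - k < (e t : ℕ) + 1).card
        + (univ.filter fun j : Fin (n - k) =>
            (univ.filter fun j' : Fin (n - k) =>
              ((e⁻¹ (Fin.castLE (Nat.sub_le n k) j') : Fin n) : ℕ) + 1 < c).card
              ≤ ((ek⁻¹ j : Fin (n - k)) : ℕ)
            ∧ n - r < (j : ℕ) + 1).card
    ∧ (univ.filter fun j' : Fin (n - k) =>
          ((e⁻¹ (Fin.castLE (Nat.sub_le n k) j') : Fin n) : ℕ) + 1 < c).card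
        + (k - (univ.filter fun t : Fin n => c ≤ (t : ℕ) + 1 ∧ n - k < (e t : ℕ) + 1).card)
        = c - 1
    ∧ (univ.filter fun t : Fin n => c ≤ (t : ℕ) + 1 ∧ n - k < (e t : ℕ) + 1).card ≤ k := by
  -- total number of big values is `k`
  have hbig : (univ.filter fun t : Fin n => n - k < (e t : ℕ) + 1).card = k := by
    rw [card_perm e (fun v : Fin n => n - k < (v : ℕ) + 1),
      card_congr_iff (fun v : Fin n => n - k < (v : ℕ) + 1)
        (fun v : Fin n => n - k ≤ (v : ℕ)) (fun v => by omega),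
      card_val_le n (n - k) (Nat.sub_le n k)]
    omega
  -- split the big values by column
  have hsplit2 := card_split (α := Fin n) (fun t => n - k < (e t : ℕ) + 1)
    (fun t => c ≤ (t : ℕ) + 1)
  rw [hbig] at hsplit2
  have e5 : (univ.filter fun t : Fin n => n - k < (e t : ℕ) + 1 ∧ c ≤ (t : ℕ) + 1).card
      = (univ.filter fun t : Fin n => c ≤ (t : ℕ) + 1 ∧ n - k < (e t : ℕ) + 1).card :=
    card_congr_iff _ _ (fun t => by omega)
  rw [e5] at hsplit2
  -- split the left columns by value size
  have hsplit3 := card_split (α := Fin n) (fun t => (t : ℕ) + 1 < c)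
    (fun t => (e t : ℕ) + 1 ≤ n - k)
  have hleft : (univ.filter fun t : Fin n => (t : ℕ) + 1 < c).card = c - 1 := by
    rw [card_congr_iff (fun t : Fin n => (t : ℕ) + 1 < c)
      (fun t : Fin n => (t : ℕ) < c - 1) (fun t => by omega)]
    exact card_val_lt n (c - 1) (by omega)
  rw [hleft] at hsplit3
  have e7 : (univ.filter fun t : Fin n => (t : ℕ) + 1 < c ∧ (e t : ℕ) + 1 ≤ n - k).card
      = (univ.filter fun j' : Fin (n - k) =>
          ((e⁻¹ (Fin.castLE (Nat.sub_le n k) j') : Fin n) : ℕ) + 1 < c).card :=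
    card_small_bij (k := k) e (fun a _ => a + 1 < c)
  rw [e7] at hsplit3
  have e8 : (univ.filter fun t : Fin n => (t : ℕ) + 1 < c ∧ ¬ ((e t : ℕ) + 1 ≤ n - k)).card
      = (univ.filter fun t : Fin n => n - k < (e t : ℕ) + 1 ∧ ¬ (c ≤ (t : ℕ) + 1)).card :=
    card_congr_iff _ _ (fun t => by omega)
  rw [e8] at hsplit3
  -- split the full count by value size
  have hsplit1 := card_split (α := Fin n)
    (fun t => c ≤ (t : ℕ) + 1 ∧ n - r < (e t : ℕ) + 1) (fun t => n - k < (e t : ℕ) + 1)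
  have e1 : (univ.filter fun t : Fin n =>
        (c ≤ (t : ℕ) + 1 ∧ n - r < (e t : ℕ) + 1) ∧ n - k < (e t : ℕ) + 1).card
      = (univ.filter fun t : Fin n => c ≤ (t : ℕ) + 1 ∧ n - k < (e t : ℕ) + 1).card :=
    card_congr_iff _ _ (fun t => by omega)
  rw [e1] at hsplit1
  have e2 : (univ.filter fun t : Fin n =>
        (c ≤ (t : ℕ) + 1 ∧ n - r < (e t : ℕ) + 1) ∧ ¬ (n - k < (e t : ℕ) + 1)).card
      = (univ.filter fun j : Fin (n - k) =>
          (c ≤ ((e⁻¹ (Fin.castLE (Nat.sub_le n k) j) : Fin n) : ℕ) + 1 ∧ n - r < (j : ℕ) + 1)).card := by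
    rw [card_congr_iff (fun t : Fin n =>
        (c ≤ (t : ℕ) + 1 ∧ n - r < (e t : ℕ) + 1) ∧ ¬ (n - k < (e t : ℕ) + 1))
      (fun t : Fin n =>
        (c ≤ (t : ℕ) + 1 ∧ n - r < (e t : ℕ) + 1) ∧ (e t : ℕ) + 1 ≤ n - k)
      (fun t => by omega)]
    exact card_small_bij (k := k) e (fun a b => c ≤ a + 1 ∧ n - r < b + 1)
  rw [e2] at hsplit1
  have e4 : (univ.filter fun j : Fin (n - k) =>
        (c ≤ ((e⁻¹ (Fin.castLE (Nat.sub_le n k) j) : Fin n) : ℕ) + 1 ∧ n - r < (j : ℕ) + 1)).card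
      = (univ.filter fun j : Fin (n - k) =>
          (univ.filter fun j' : Fin (n - k) =>
            ((e⁻¹ (Fin.castLE (Nat.sub_le n k) j') : Fin n) : ℕ) + 1 < c).card
            ≤ ((ek⁻¹ j : Fin (n - k)) : ℕ)
          ∧ n - r < (j : ℕ) + 1).card :=
    card_congr_iff _ _ (fun j => and_congr_left'
      (rank_iff (fun j' : Fin (n - k) => e⁻¹ (Fin.castLE (Nat.sub_le n k) j')) ek hek c j))
  rw [e4] at hsplit1
  refine ⟨hsplit1.symm, by omega, by omega⟩

theorem top_k_rows_lemma (n k : ℕ) (hk1 : 1 ≤ k) (hkn : k ≤ n)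
    (π σ : Equiv.Perm (Fin n)) (πk σk : Equiv.Perm (Fin (n - k)))
    -- `πk = π^{k*}`: the permutation of `[n-k]` obtained from `π` by deleting the `k`
    -- largest entries, characterized by preservation of the relative order of positions
    (hπk : ∀ i j : Fin (n - k),
      πk⁻¹ i < πk⁻¹ j ↔ π⁻¹ (Fin.castLE (Nat.sub_le n k) i) < π⁻¹ (Fin.castLE (Nat.sub_le n k) j))
    -- `σk = σ^{k*}`
    (hσk : ∀ i j : Fin (n - k),
      σk⁻¹ i < σk⁻¹ j ↔ σ⁻¹ (Fin.castLE (Nat.sub_le n k) i) < σ⁻¹ (Fin.castLE (Nat.sub_le n k) j))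
    -- (a) every northeastern submatrix with at most `k` rows has at least as many
    -- crosses as balls
    (ha : ∀ r c : ℕ, r ∈ Finset.Icc 1 k → c ∈ Finset.Icc 1 n →
      (Finset.univ.filter fun t : Fin n => c ≤ (t : ℕ) + 1 ∧ n - r < (σ t : ℕ) + 1).card ≤
      (Finset.univ.filter fun t : Fin n => c ≤ (t : ℕ) + 1 ∧ n - r < (π t : ℕ) + 1).card)
    -- (b) `π^{k*} ≤_M σ^{k*}`
    (hb : MatLE πk σk) :
    MatLE π σ := by
  intro r c hr hc
  rw [Finset.mem_Icc] at hr hc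
  by_cases hrk : r ≤ k
  · exact ha r c (Finset.mem_Icc.2 ⟨hr.1, hrk⟩) (Finset.mem_Icc.2 hc)
  push_neg at hrk
  have hrn : r ≤ n := hr.2
  have hc1 : 1 ≤ c := hc.1
  have hcn : c ≤ n := hc.2
  obtain ⟨kp1, kp2, kp3⟩ := key_lemma hkn r c hrk hrn hc1 hcn π πk hπk
  obtain ⟨ks1, ks2, ks3⟩ := key_lemma hkn r c hrk hrn hc1 hcn σ σk hσk
  -- (a) at `r = k`
  have hA : (Finset.univ.filter fun t : Fin n =>
        c ≤ (t : ℕ) + 1 ∧ n - k < (σ t : ℕ) + 1).card ≤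
      (Finset.univ.filter fun t : Fin n =>
        c ≤ (t : ℕ) + 1 ∧ n - k < (π t : ℕ) + 1).card :=
    ha k c (Finset.mem_Icc.2 ⟨hk1, le_refl k⟩) (Finset.mem_Icc.2 hc)
  set mp := (univ.filter fun j' : Fin (n - k) =>
      ((π⁻¹ (Fin.castLE (Nat.sub_le n k) j') : Fin n) : ℕ) + 1 < c).card with hmp
  set ms := (univ.filter fun j' : Fin (n - k) =>
      ((σ⁻¹ (Fin.castLE (Nat.sub_le n k) j') : Fin n) : ℕ) + 1 < c).card with hms
  by_cases hcase : ms < n - k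
  · -- use (b) at row `r - k`, column `ms + 1`
    have hb' := hb (r - k) (ms + 1)
      (Finset.mem_Icc.2 ⟨by omega, by omega⟩) (Finset.mem_Icc.2 ⟨by omega, by omega⟩)
    have conv : ∀ ek : Equiv.Perm (Fin (n - k)),
        (Finset.univ.filter fun t' : Fin (n - k) =>
          ms + 1 ≤ (t' : ℕ) + 1 ∧ n - k - (r - k) < (ek t' : ℕ) + 1).card
        = (univ.filter fun j : Fin (n - k) =>
            ms ≤ ((ek⁻¹ j : Fin (n - k)) : ℕ) ∧ n - r < (j : ℕ) + 1).card := by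
      intro ek
      rw [← card_perm ek (fun j : Fin (n - k) =>
        ms ≤ ((ek⁻¹ j : Fin (n - k)) : ℕ) ∧ n - r < (j : ℕ) + 1)]
      apply card_congr_iff
      intro t'
      rw [Equiv.Perm.inv_def, Equiv.symm_apply_apply]
      omega
    rw [conv σk, conv πk] at hb'
    -- shifting the column from `ms + 1` to `mp + 1` loses at most `mp - ms`
    have h3 : (univ.filter fun j : Fin (n - k) =>
          ms ≤ ((πk⁻¹ j : Fin (n - k)) : ℕ) ∧ n - r < (j : ℕ) + 1).card
        ≤ (univ.filter fun j : Fin (n - k) =>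
            mp ≤ ((πk⁻¹ j : Fin (n - k)) : ℕ) ∧ n - r < (j : ℕ) + 1).card + (mp - ms) := by
      have hsub : (univ.filter fun j : Fin (n - k) =>
            ms ≤ ((πk⁻¹ j : Fin (n - k)) : ℕ) ∧ n - r < (j : ℕ) + 1)
          ⊆ (univ.filter fun j : Fin (n - k) =>
              mp ≤ ((πk⁻¹ j : Fin (n - k)) : ℕ) ∧ n - r < (j : ℕ) + 1)
            ∪ (univ.filter fun j : Fin (n - k) =>
              ms ≤ ((πk⁻¹ j : Fin (n - k)) : ℕ) ∧ ((πk⁻¹ j : Fin (n - k)) : ℕ) < mp) := by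
        intro j hj
        simp only [mem_filter, mem_univ, true_and, mem_union] at hj ⊢
        omega
      have hmid : (univ.filter fun j : Fin (n - k) =>
            ms ≤ ((πk⁻¹ j : Fin (n - k)) : ℕ) ∧ ((πk⁻¹ j : Fin (n - k)) : ℕ) < mp).card
          ≤ mp - ms := by
        have hle := Finset.card_le_card_of_injOn
          (s := univ.filter fun j : Fin (n - k) =>
            ms ≤ ((πk⁻¹ j : Fin (n - k)) : ℕ) ∧ ((πk⁻¹ j : Fin (n - k)) : ℕ) < mp)
          (t := Finset.Ico ms mp) (fun j : Fin (n - k) => ((πk⁻¹ j : Fin (n - k)) : ℕ))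
          (fun j hj => by
            simp only [Finset.mem_coe, mem_filter, mem_univ, true_and] at hj
            exact Finset.mem_Ico.2 hj)
          (fun a _ b _ hab => (Equiv.injective πk⁻¹) (Fin.ext hab))
        simpa [Nat.card_Ico] using hle
      calc (univ.filter fun j : Fin (n - k) =>
            ms ≤ ((πk⁻¹ j : Fin (n - k)) : ℕ) ∧ n - r < (j : ℕ) + 1).card
          ≤ ((univ.filter fun j : Fin (n - k) =>
              mp ≤ ((πk⁻¹ j : Fin (n - k)) : ℕ) ∧ n - r < (j : ℕ) + 1)
            ∪ (univ.filter fun j : Fin (n - k) =>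
              ms ≤ ((πk⁻¹ j : Fin (n - k)) : ℕ) ∧ ((πk⁻¹ j : Fin (n - k)) : ℕ) < mp)).card :=
            Finset.card_le_card hsub
        _ ≤ _ := by
            refine le_trans (Finset.card_union_le _ _) ?_
            omega
    omega
  · -- `ms ≥ n - k`: the `σ`-side extra count is zero
    have hz : (univ.filter fun j : Fin (n - k) =>
          ms ≤ ((σk⁻¹ j : Fin (n - k)) : ℕ) ∧ n - r < (j : ℕ) + 1).card = 0 := by
      rw [Finset.card_eq_zero, Finset.filter_eq_empty_iff]
      intro j _
      have := (σk⁻¹ j).isLt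
      omega
    omega
end

section
/- The sequence Q_k := N_k / (2k)! is supermultiplicative: for all integers k₁, k₂ ≥ 1, N_{k₁+k₂} / (2(k₁+k₂))! ≥ (N_{k₁} / (2k₁)!) · (N_{k₂} / (2k₂)!). Consequently, lim_{k→∞} (Q_k)^{1/k} exists and equals sup_{k ≥ 1} (Q_k)^{1/k}. -/
open Finset Filter Set


/-- key order lemma -/
lemma orderEmb_lt_iff {N n : ℕ} (S : Finset (Fin N)) (h : S.card = n) (x : Fin n) (c : ℕ) :
    ((S.orderEmbOfFin h x : Fin N) : ℕ) < c ↔ (x : ℕ) < (S.filter fun s : Fin N => s.val < c).card := by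
  constructor
  · intro hx
    have hsub : (Finset.Iic x).image (S.orderEmbOfFin h) ⊆ S.filter fun s : Fin N => s.val < c := by
      intro t ht
      simp only [Finset.mem_image, Finset.mem_Iic] at ht
      obtain ⟨y, hy, rfl⟩ := ht
      refine mem_filter.2 ⟨S.orderEmbOfFin_mem h y, ?_⟩
      exact lt_of_le_of_lt (Fin.le_def.1 ((S.orderEmbOfFin h).monotone hy)) hx
    have := Finset.card_le_card hsub
    rwa [Finset.card_image_of_injective _ (S.orderEmbOfFin h).injective, Fin.card_Iic,
      Nat.add_one_le_iff] at this
  · intro hx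
    by_contra h2
    push_neg at h2
    have hsub : (S.filter fun s : Fin N => s.val < c) ⊆ (Finset.Iio x).image (S.orderEmbOfFin h) := by
      intro t ht
      rw [mem_filter] at ht
      have : t ∈ Set.range (S.orderEmbOfFin h) := by
        rw [Finset.range_orderEmbOfFin]; exact ht.1
      obtain ⟨y, rfl⟩ := this
      refine Finset.mem_image.2 ⟨y, Finset.mem_Iio.2 ?_, rfl⟩
      by_contra hyx
      push_neg at hyx
      exact absurd (lt_of_lt_of_le ht.2 (le_trans h2 (Fin.le_def.1
        ((S.orderEmbOfFin h).monotone hyx)))) (lt_irrefl _)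
    have := Finset.card_le_card hsub
    rw [Finset.card_image_of_injective _ (S.orderEmbOfFin h).injective, Fin.card_Iio] at this
    exact absurd (lt_of_lt_of_le hx this) (lt_irrefl _)

def IsValid {k : ℕ} (f : (Fin k ⊕ Fin k) ≃ Fin (2 * k)) : Prop :=
  ∀ j : Fin k, ∀ t : Fin (2 * k),
    (Finset.univ.filter fun i : Fin k => i ≤ j ∧ f (Sum.inl i) ≤ t).card ≤
    (Finset.univ.filter fun i : Fin k => i ≤ j ∧ f (Sum.inr i) ≤ t).card

lemma isValid_iff_nat {k : ℕ} (f : (Fin k ⊕ Fin k) ≃ Fin (2 * k)) :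
    IsValid f ↔ ∀ j : Fin k, ∀ c : ℕ,
      (Finset.univ.filter fun i : Fin k => i ≤ j ∧ (f (Sum.inl i)).val < c).card ≤
      (Finset.univ.filter fun i : Fin k => i ≤ j ∧ (f (Sum.inr i)).val < c).card := by
  constructor
  · intro hv j c
    rcases Nat.eq_zero_or_pos c with rfl | hc
    · simp
    rcases le_or_gt c (2 * k) with hck | hck
    · have ht : c - 1 < 2 * k := by omega
      have := hv j ⟨c - 1, ht⟩
      have hrw : ∀ x : Fin (2 * k), (x ≤ (⟨c - 1, ht⟩ : Fin (2 * k))) ↔ x.val < c := by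
        intro x; rw [Fin.le_def]; simp; omega
      simpa only [hrw] using this
    · have hrw : ∀ x : Fin (2 * k), x.val < c := fun x => lt_trans x.isLt hck
      simp only [hrw, and_true]
      exact le_refl _

  · intro hv j t
    have := hv j (t.val + 1)
    have hrw : ∀ x : Fin (2 * k), (x.val < t.val + 1) ↔ x ≤ t := by
      intro x; rw [Fin.le_def]; omega
    simpa only [hrw] using this

/-- `N_k`: the number of bijections `f` from `{u₁,…,u_k, v₁,…,v_k}` (encoded as
`Fin k ⊕ Fin k`, with `u_i = Sum.inl i` and `v_i = Sum.inr i`) onto `[2k]` such that for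
every `j` and every threshold `t`, the number of `u_1,…,u_j` with value at most `t` never
exceeds the number of `v_1,…,v_j` with value at most `t`. -/
noncomputable def Ncount (k : ℕ) : ℕ :=
  Nat.card {f : (Fin k ⊕ Fin k) ≃ Fin (2 * k) //
    ∀ j : Fin k, ∀ t : Fin (2 * k),
      (Finset.univ.filter fun i : Fin k => i ≤ j ∧ f (Sum.inl i) ≤ t).card ≤
      (Finset.univ.filter fun i : Fin k => i ≤ j ∧ f (Sum.inr i) ≤ t).card}

lemma Ncount_def (k : ℕ) :
    Ncount k = Nat.card {f : (Fin k ⊕ Fin k) ≃ Fin (2 * k) // IsValid f} := rfl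

def stdEquiv (k : ℕ) : (Fin k ⊕ Fin k) ≃ Fin (2 * k) :=
  (Equiv.sumComm _ _).trans (finSumFinEquiv.trans (finCongr (two_mul k).symm))

lemma stdEquiv_inl (k : ℕ) (i : Fin k) : (stdEquiv k (Sum.inl i)).val = k + i := by
  simp [stdEquiv]; try omega

lemma stdEquiv_inr (k : ℕ) (i : Fin k) : (stdEquiv k (Sum.inr i)).val = (i : ℕ) := by
  simp [stdEquiv]; try omega

lemma stdEquiv_valid (k : ℕ) : IsValid (stdEquiv k) := by
  intro j t
  apply Finset.card_le_card
  intro i hi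
  rw [Finset.mem_filter] at hi ⊢
  refine ⟨hi.1, hi.2.1, ?_⟩
  have h1 := hi.2.2
  rw [Fin.le_def] at h1 ⊢
  rw [stdEquiv_inl] at h1
  rw [stdEquiv_inr]
  omega

lemma one_le_Ncount (k : ℕ) : 1 ≤ Ncount k := by
  rw [Ncount_def]
  have : Nonempty {f : (Fin k ⊕ Fin k) ≃ Fin (2 * k) // IsValid f} :=
    ⟨⟨stdEquiv k, stdEquiv_valid k⟩⟩
  exact Nat.one_le_iff_ne_zero.2 Nat.card_pos.ne'

lemma Ncount_le (k : ℕ) : Ncount k ≤ Nat.factorial (2 * k) := by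
  rw [Ncount_def]
  have h1 : Nat.card {f : (Fin k ⊕ Fin k) ≃ Fin (2 * k) // IsValid f} ≤
      Nat.card ((Fin k ⊕ Fin k) ≃ Fin (2 * k)) :=
    Nat.card_le_card_of_injective _ Subtype.val_injective
  refine le_trans h1 ?_
  rw [Nat.card_eq_fintype_card, Fintype.card_equiv (stdEquiv k)]
  simp [Nat.factorial, two_mul]


lemma card_filter_split {k1 k2 : ℕ} (p : Fin (k1 + k2) → Prop) [DecidablePred p] :
    (univ.filter p).card =
      (univ.filter fun a : Fin k1 => p (Fin.castAdd k2 a)).card +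
      (univ.filter fun b : Fin k2 => p (Fin.natAdd k1 b)).card := by
  simp only [Finset.card_filter]
  rw [← Equiv.sum_comp (finSumFinEquiv : Fin k1 ⊕ Fin k2 ≃ Fin (k1 + k2))
    (fun x => if p x then 1 else 0), Fintype.sum_sum_type]
  simp [finSumFinEquiv_apply_left, finSumFinEquiv_apply_right]
  rw [Finset.card_filter, Finset.card_filter]
  rfl

section Construct
variable {k1 k2 : ℕ} (S : Finset (Fin (2 * (k1 + k2)))) (hS : S.card = 2 * k1)

include hS in
lemma compl_card : Sᶜ.card = 2 * k2 := by
  rw [Finset.card_compl, Fintype.card_fin, hS]; ring_nf; omega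

def midEquiv : Fin (2 * k1) ⊕ Fin (2 * k2) ≃ Fin (2 * (k1 + k2)) :=
  (Equiv.sumCongr (S.orderIsoOfFin hS).toEquiv
    ((Sᶜ.orderIsoOfFin (compl_card S hS)).toEquiv.trans
      (Equiv.subtypeEquivRight (fun x => Finset.mem_compl)))).trans
    (Equiv.sumCompl (· ∈ S))

variable (f1 : (Fin k1 ⊕ Fin k1) ≃ Fin (2 * k1)) (f2 : (Fin k2 ⊕ Fin k2) ≃ Fin (2 * k2))

def bigEquiv : (Fin (k1 + k2) ⊕ Fin (k1 + k2)) ≃ Fin (2 * (k1 + k2)) :=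
  (Equiv.sumCongr finSumFinEquiv.symm finSumFinEquiv.symm).trans
    ((Equiv.sumSumSumComm (Fin k1) (Fin k2) (Fin k1) (Fin k2)).trans
      ((Equiv.sumCongr f1 f2).trans (midEquiv S hS)))

lemma bigEquiv_block1 (x : Fin k1 ⊕ Fin k1) :
    bigEquiv S hS f1 f2 (Sum.map (Fin.castAdd k2) (Fin.castAdd k2) x) =
      S.orderEmbOfFin hS (f1 x) := by
  cases x <;> simp [bigEquiv, Equiv.sumSumSumComm, midEquiv]

lemma bigEquiv_block2 (x : Fin k2 ⊕ Fin k2) :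
    bigEquiv S hS f1 f2 (Sum.map (Fin.natAdd k1) (Fin.natAdd k1) x) =
      Sᶜ.orderEmbOfFin (compl_card S hS) (f2 x) := by
  cases x <;> simp [bigEquiv, Equiv.sumSumSumComm, midEquiv]

lemma bigEquiv_valid (hk1 : 1 ≤ k1) (h1 : IsValid f1) (h2 : IsValid f2) :
    IsValid (bigEquiv S hS f1 f2) := by
  rw [isValid_iff_nat]
  intro j c
  rw [isValid_iff_nat] at h1 h2
  set d1 := (S.filter fun s : Fin (2 * (k1 + k2)) => s.val < c).card with hd1
  set d2 := (Sᶜ.filter fun s : Fin (2 * (k1 + k2)) => s.val < c).card with hd2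
  have split : ∀ w : Bool,
      (univ.filter fun i : Fin (k1 + k2) => i ≤ j ∧
        (bigEquiv S hS f1 f2 ((cond w Sum.inl Sum.inr) i)).val < c).card =
      (univ.filter fun a : Fin k1 => Fin.castAdd k2 a ≤ j ∧
        (f1 ((cond w Sum.inl Sum.inr) a)).val < d1).card +
      (univ.filter fun b : Fin k2 => Fin.natAdd k1 b ≤ j ∧
        (f2 ((cond w Sum.inl Sum.inr) b)).val < d2).card := by
    intro w
    rw [card_filter_split]
    refine congrArg₂ (· + ·) ?_ ?_
    · refine congrArg Finset.card (Finset.filter_congr ?_)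
      intro a _
      have hb : bigEquiv S hS f1 f2 ((cond w Sum.inl Sum.inr) (Fin.castAdd k2 a)) =
          S.orderEmbOfFin hS (f1 ((cond w Sum.inl Sum.inr) a)) := by
        cases w
        · exact bigEquiv_block1 S hS f1 f2 (Sum.inr a)
        · exact bigEquiv_block1 S hS f1 f2 (Sum.inl a)
      rw [hb, orderEmb_lt_iff]
    · refine congrArg Finset.card (Finset.filter_congr ?_)
      intro b _
      have hb : bigEquiv S hS f1 f2 ((cond w Sum.inl Sum.inr) (Fin.natAdd k1 b)) =
          Sᶜ.orderEmbOfFin (compl_card S hS) (f2 ((cond w Sum.inl Sum.inr) b)) := by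
        cases w
        · exact bigEquiv_block2 S hS f1 f2 (Sum.inr b)
        · exact bigEquiv_block2 S hS f1 f2 (Sum.inl b)
      rw [hb, orderEmb_lt_iff]
  have sL := split true
  have sR := split false
  simp only [cond_true, cond_false] at sL sR
  rw [sL, sR]
  rcases lt_or_ge j.val k1 with hj | hj
  · have hno : ∀ b : Fin k2, ¬ (Fin.natAdd k1 b ≤ j) := by
      intro b hb
      rw [Fin.le_def] at hb
      simp only [Fin.coe_natAdd] at hb
      omega
    have e2 : ∀ g : Fin k2 ⊕ Fin k2 ≃ Fin (2 * k2), ∀ z : Fin k2 → Fin k2 ⊕ Fin k2,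
        (univ.filter fun b : Fin k2 => Fin.natAdd k1 b ≤ j ∧ (g (z b)).val < d2).card = 0 := by
      intro g z
      rw [Finset.card_eq_zero, Finset.filter_eq_empty_iff]
      intro b _
      simp only [not_and]
      intro hb
      exact absurd hb (hno b)
    rw [e2 f2 Sum.inl, e2 f2 Sum.inr]
    simp only [add_zero]
    have hcast : ∀ a : Fin k1, (Fin.castAdd k2 a ≤ j) ↔ a ≤ (⟨j.val, hj⟩ : Fin k1) := by
      intro a
      rw [Fin.le_def, Fin.le_def]
      simp
    simp only [hcast]
    exact h1 ⟨j.val, hj⟩ d1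
  · have hcast : ∀ a : Fin k1, (Fin.castAdd k2 a ≤ j) ↔
        a ≤ (⟨k1 - 1, by omega⟩ : Fin k1) := by
      intro a
      rw [Fin.le_def, Fin.le_def]
      simp only [Fin.coe_castAdd]
      have := a.isLt
      omega
    have hnat : ∀ b : Fin k2, (Fin.natAdd k1 b ≤ j) ↔
        b ≤ (⟨j.val - k1, by have := j.isLt; omega⟩ : Fin k2) := by
      intro b
      rw [Fin.le_def, Fin.le_def]
      simp only [Fin.coe_natAdd]
      omega
    simp only [hcast, hnat]
    exact Nat.add_le_add (h1 _ d1) (h2 _ d2)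

lemma image_orderEmbOfFin {N n : ℕ} (T : Finset (Fin N)) (h : T.card = n) :
    Finset.image (T.orderEmbOfFin h) univ = T := by
  apply Finset.coe_injective
  rw [Finset.coe_image, Finset.coe_univ, Set.image_univ, Finset.range_orderEmbOfFin]

lemma bigEquiv_image :
    Finset.image (fun x : Fin k1 ⊕ Fin k1 =>
      bigEquiv S hS f1 f2 (Sum.map (Fin.castAdd k2) (Fin.castAdd k2) x)) univ = S := by
  have he : (fun x : Fin k1 ⊕ Fin k1 =>
      bigEquiv S hS f1 f2 (Sum.map (Fin.castAdd k2) (Fin.castAdd k2) x)) =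
      (fun x => S.orderEmbOfFin hS (f1 x)) := funext (bigEquiv_block1 S hS f1 f2)
  rw [he, show (fun x => S.orderEmbOfFin hS (f1 x)) = (S.orderEmbOfFin hS) ∘ f1 from rfl,
    ← Finset.image_image, Finset.image_univ_equiv, image_orderEmbOfFin]

end Construct

theorem key_count (k1 k2 : ℕ) (hk1 : 1 ≤ k1) :
    Ncount k1 * Ncount k2 * Nat.choose (2 * (k1 + k2)) (2 * k1) ≤ Ncount (k1 + k2) := by
  classical
  let V : (n : ℕ) → Type := fun n => {f : (Fin n ⊕ Fin n) ≃ Fin (2 * n) // IsValid f}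
  let Φ : (V k1 × V k2) × {S : Finset (Fin (2 * (k1 + k2))) // S.card = 2 * k1} → V (k1 + k2) :=
    fun p => ⟨bigEquiv p.2.1 p.2.2 p.1.1.1 p.1.2.1,
      bigEquiv_valid _ _ _ _ hk1 p.1.1.2 p.1.2.2⟩
  have hΦ : Function.Injective Φ := by
    rintro ⟨⟨⟨f1, v1⟩, ⟨f2, v2⟩⟩, ⟨S, hS⟩⟩ ⟨⟨⟨g1, w1⟩, ⟨g2, w2⟩⟩, ⟨T, hT⟩⟩ h
    have hfun : bigEquiv S hS f1 f2 = bigEquiv T hT g1 g2 := congrArg Subtype.val h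
    have hST : S = T := by
      rw [← bigEquiv_image S hS f1 f2, ← bigEquiv_image T hT g1 g2, hfun]
    subst hST
    have hg1 : f1 = g1 := by
      apply Equiv.ext
      intro x
      apply (S.orderEmbOfFin hS).injective
      rw [← bigEquiv_block1 S hS f1 f2 x, hfun, bigEquiv_block1]
    have hg2 : f2 = g2 := by
      apply Equiv.ext
      intro x
      apply (Sᶜ.orderEmbOfFin (compl_card S hS)).injective
      rw [← bigEquiv_block2 S hS f1 f2 x, hfun, bigEquiv_block2]
    subst hg1; subst hg2
    rfl
  have hcard := Nat.card_le_card_of_injective Φ hΦ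
  have hdom : Nat.card ((V k1 × V k2) × {S : Finset (Fin (2 * (k1 + k2))) // S.card = 2 * k1}) =
      Ncount k1 * Ncount k2 * Nat.choose (2 * (k1 + k2)) (2 * k1) := by
    rw [Nat.card_prod, Nat.card_prod, ← Ncount_def, ← Ncount_def]
    congr 1
    rw [Nat.card_eq_fintype_card, Fintype.card_finset_len, Fintype.card_fin]
  rw [hdom] at hcard
  rw [Ncount_def]
  exact hcard

noncomputable def Q (k : ℕ) : ℝ := (Ncount k : ℝ) / (Nat.factorial (2 * k))

lemma Q_pos (k : ℕ) : 0 < Q k := by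
  apply div_pos
  · exact_mod_cast Nat.lt_of_lt_of_le Nat.zero_lt_one (one_le_Ncount k)
  · exact_mod_cast Nat.factorial_pos _

lemma Q_le_one (k : ℕ) : Q k ≤ 1 := by
  rw [Q, div_le_one (by exact_mod_cast Nat.factorial_pos _)]
  exact_mod_cast Ncount_le k

lemma Q_supermul (k1 k2 : ℕ) (hk1 : 1 ≤ k1) : Q k1 * Q k2 ≤ Q (k1 + k2) := by
  rw [Q, Q, Q, div_mul_div_comm,
    div_le_div_iff₀ (by positivity) (by exact_mod_cast Nat.factorial_pos _)]
  have hfact : Nat.choose (2 * (k1 + k2)) (2 * k1) * Nat.factorial (2 * k1) *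
      Nat.factorial (2 * k2) = Nat.factorial (2 * (k1 + k2)) := by
    have h := Nat.choose_mul_factorial_mul_factorial
      (show 2 * k1 ≤ 2 * (k1 + k2) by omega)
    rwa [show 2 * (k1 + k2) - 2 * k1 = 2 * k2 by omega] at h
  have hnat : Ncount k1 * Ncount k2 * Nat.factorial (2 * (k1 + k2)) ≤
      Ncount (k1 + k2) * (Nat.factorial (2 * k1) * Nat.factorial (2 * k2)) := by
    calc Ncount k1 * Ncount k2 * Nat.factorial (2 * (k1 + k2))
        = (Ncount k1 * Ncount k2 * Nat.choose (2 * (k1 + k2)) (2 * k1)) *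
          (Nat.factorial (2 * k1) * Nat.factorial (2 * k2)) := by rw [← hfact]; ring
      _ ≤ Ncount (k1 + k2) * (Nat.factorial (2 * k1) * Nat.factorial (2 * k2)) :=
          Nat.mul_le_mul_right _ (key_count k1 k2 hk1)
  exact_mod_cast hnat

lemma Q_zero : Q 0 = 1 := by
  have h1 := one_le_Ncount 0
  have h2 := Ncount_le 0
  have : Ncount 0 = 1 := by simpa [Nat.factorial] using le_antisymm h2 h1
  simp [Q, this, Nat.factorial]

noncomputable def u (n : ℕ) : ℝ := -Real.log (Q n)

lemma u_subadd : Subadditive u := by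
  intro m n
  rcases Nat.eq_zero_or_pos m with rfl | hm
  · simp [u, Q_zero]
  rcases Nat.eq_zero_or_pos n with rfl | hn
  · simp [u, Q_zero]
  have h := Q_supermul m n hm
  have hlog := Real.log_le_log (mul_pos (Q_pos m) (Q_pos n)) h
  rw [Real.log_mul (Q_pos m).ne' (Q_pos n).ne'] at hlog
  simp only [u]
  linarith

lemma u_nonneg (n : ℕ) : 0 ≤ u n := by
  have := Real.log_nonpos (Q_pos n).le (Q_le_one n)
  simp only [u]; linarith

lemma u_bdd : BddBelow (Set.range fun n : ℕ => u n / n) := by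
  refine ⟨0, ?_⟩
  rintro x ⟨n, rfl⟩
  exact div_nonneg (u_nonneg n) (Nat.cast_nonneg n)

lemma Q_rpow_eq (k : ℕ) (hk : 1 ≤ k) :
    Q k ^ ((1 : ℝ) / (k : ℝ)) = Real.exp (-(u k / k)) := by
  rw [Real.rpow_def_of_pos (Q_pos k)]
  congr 1
  have : Real.log (Q k) = -u k := by simp [u]
  rw [this]
  field_simp

theorem Q_supermultiplicative :
    (∀ k₁ k₂ : ℕ, 1 ≤ k₁ → 1 ≤ k₂ →
      (Ncount k₁ : ℝ) / (Nat.factorial (2 * k₁)) *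
        ((Ncount k₂ : ℝ) / (Nat.factorial (2 * k₂))) ≤
      (Ncount (k₁ + k₂) : ℝ) / (Nat.factorial (2 * (k₁ + k₂)))) ∧
    Filter.Tendsto
      (fun k : ℕ => ((Ncount k : ℝ) / (Nat.factorial (2 * k))) ^ ((1 : ℝ) / (k : ℝ)))
      Filter.atTop
      (nhds (⨆ k : ℕ,
        ((Ncount (k + 1) : ℝ) / (Nat.factorial (2 * (k + 1)))) ^ ((1 : ℝ) / ((k : ℝ) + 1)))) := by
  constructor
  · intro k1 k2 hk1 _
    exact Q_supermul k1 k2 hk1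
  · have hsub := u_subadd
    have htend := hsub.tendsto_lim u_bdd
    -- the limit set
    have hset : ((fun n : ℕ => u n / n) '' Set.Ici 1) =
        Set.range (fun k : ℕ => u (k + 1) / (k + 1 : ℕ)) := by
      ext x
      constructor
      · rintro ⟨n, hn, rfl⟩
        refine ⟨n - 1, ?_⟩
        show u (n - 1 + 1) / ((n - 1 + 1 : ℕ) : ℝ) = _
        rw [Nat.sub_add_cancel hn]
      · rintro ⟨k, rfl⟩
        exact ⟨k + 1, by simp, rfl⟩
    have hlim : Real.exp (-hsub.lim) =
        ⨆ k : ℕ, Real.exp (-(u (k + 1) / ((k + 1 : ℕ) : ℝ))) := by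
      have hA : Subadditive.lim hsub = sInf (Set.range (fun k : ℕ => u (k + 1) / (k + 1 : ℕ))) := by
        rw [Subadditive.lim, hset]
      rw [hA]
      have := Antitone.map_csInf_of_continuousAt
        (f := fun x : ℝ => Real.exp (-x))
        (A := Set.range (fun k : ℕ => u (k + 1) / (k + 1 : ℕ)))
        (Real.continuous_exp.comp continuous_neg).continuousAt
        (fun a b hab => Real.exp_le_exp.2 (neg_le_neg hab))
        (Set.range_nonempty _)
        (by
          refine ⟨0, ?_⟩
          rintro x ⟨k, rfl⟩
          exact div_nonneg (u_nonneg _) (by positivity))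
      exact this.trans (by rw [← Set.range_comp]; rfl)
    have hgoal : (⨆ k : ℕ,
        ((Ncount (k + 1) : ℝ) / (Nat.factorial (2 * (k + 1)))) ^ ((1 : ℝ) / ((k : ℝ) + 1))) =
        Real.exp (-hsub.lim) := by
      rw [hlim]
      congr 1
      funext k
      have h1 : ((Ncount (k + 1) : ℝ) / (Nat.factorial (2 * (k + 1)))) = Q (k + 1) := rfl
      have h2 : ((1 : ℝ) / ((k : ℝ) + 1)) = (1 : ℝ) / ((k + 1 : ℕ) : ℝ) := by push_cast; ring
      rw [h1, h2, Q_rpow_eq (k + 1) (by omega)]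
    rw [hgoal]
    have hexp : Filter.Tendsto (fun n : ℕ => Real.exp (-(u n / n))) atTop
        (nhds (Real.exp (-hsub.lim))) :=
      (Real.continuous_exp.comp continuous_neg).continuousAt.tendsto.comp htend
    refine hexp.congr' ?_
    filter_upwards [eventually_ge_atTop 1] with k hk
    exact (Q_rpow_eq k hk).symm
end

section
/- The sequence Q*_k := N*_k / (2k)! is submultiplicative: for all integers k₁, k₂ ≥ 1, N*_{k₁+k₂} / (2(k₁+k₂))! ≤ (N*_{k₁} / (2k₁)!) · (N*_{k₂} / (2k₂)!). Consequently, lim_{k→∞} (Q*_k)^{1/k} exists and equals inf_{k ≥ 1} (Q*_k)^{1/k}. -/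
/-- `N*_k`: the number of bijections `g` from `{x₁,…,x_k, y₁,…,y_k}` (encoded as
`Fin k ⊕ Fin k`, with `x_i = Sum.inl i` and `y_i = Sum.inr i`) onto `[2k]` such that
(1) `g(y_j) < g(x_j)` for every `j`, and (2) for all `i < j`, if `g(x_i) < g(x_j)`
then `g(y_i) < g(y_j)`. -/
noncomputable def NstarCount (k : ℕ) : ℕ :=
  Nat.card {g : (Fin k ⊕ Fin k) ≃ Fin (2 * k) //
    (∀ j : Fin k, g (Sum.inr j) < g (Sum.inl j)) ∧
    (∀ i j : Fin k, i < j → g (Sum.inl i) < g (Sum.inl j) → g (Sum.inr i) < g (Sum.inr j))}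

open Filter Real Function


lemma nstar_pos (k : ℕ) : 0 < NstarCount k := by
  have hf : ∀ j : Fin k, 2 * j.val + 1 < 2 * k := fun j => by have := j.2; omega
  have hg : ∀ j : Fin k, 2 * j.val < 2 * k := fun j => by have := j.2; omega
  set f : (Fin k ⊕ Fin k) → Fin (2 * k) := fun z =>
    Sum.rec (fun j => ⟨2 * j.val + 1, hf j⟩) (fun j => ⟨2 * j.val, hg j⟩) z with hfdef
  have hinj : Injective f := by
    rintro (i | i) (j | j) h <;>
      [skip; skip; skip; skip] <;>
      simp only [hfdef, Fin.mk.injEq] at h <;>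
      first
        | (congr 1; apply Fin.ext; omega)
        | omega
  have hbij : Bijective f := by
    rw [Fintype.bijective_iff_injective_and_card]
    refine ⟨hinj, by simp; omega⟩
  have hcond : (∀ j : Fin k, (Equiv.ofBijective f hbij) (Sum.inr j) < (Equiv.ofBijective f hbij) (Sum.inl j)) ∧
    (∀ i j : Fin k, i < j → (Equiv.ofBijective f hbij) (Sum.inl i) < (Equiv.ofBijective f hbij) (Sum.inl j) →
      (Equiv.ofBijective f hbij) (Sum.inr i) < (Equiv.ofBijective f hbij) (Sum.inr j)) := by
    constructor
    · intro j; simp [hfdef, Equiv.ofBijective_apply, Fin.lt_def]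
    · intro i j hij _; simp only [Equiv.ofBijective_apply, hfdef, Fin.lt_def]
      have : i.val < j.val := hij
      omega
  have : Nonempty {g : (Fin k ⊕ Fin k) ≃ Fin (2 * k) //
    (∀ j : Fin k, g (Sum.inr j) < g (Sum.inl j)) ∧
    (∀ i j : Fin k, i < j → g (Sum.inl i) < g (Sum.inl j) → g (Sum.inr i) < g (Sum.inr j))} :=
    ⟨⟨Equiv.ofBijective f hbij, hcond⟩⟩
  exact Nat.card_pos

lemma nstar_le (k : ℕ) : NstarCount k ≤ (2 * k).factorial := by
  have h1 : NstarCount k ≤ Nat.card ((Fin k ⊕ Fin k) ≃ Fin (2 * k)) :=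
    Nat.card_le_card_of_injective Subtype.val Subtype.val_injective
  refine h1.trans ?_
  rw [Nat.card_eq_fintype_card,
    Fintype.card_equiv (finSumFinEquiv.trans (finCongr (two_mul k).symm))]
  simp [two_mul]


section Inj
variable {a b : ℕ}

/-- embedding of first-block indices -/
def emb1 (b : ℕ) (z : Fin a ⊕ Fin a) : Fin (a + b) ⊕ Fin (a + b) :=
  Sum.map (Fin.castAdd b) (Fin.castAdd b) z

def emb2 (a : ℕ) (z : Fin b ⊕ Fin b) : Fin (a + b) ⊕ Fin (a + b) :=
  Sum.map (Fin.natAdd a) (Fin.natAdd a) z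

lemma emb1_inj : Injective (emb1 (a := a) b) := by
  rintro (i | i) (j | j) h <;> simp_all [emb1, Fin.ext_iff]

lemma emb2_inj : Injective (emb2 (b := b) a) := by
  rintro (i | i) (j | j) h <;> simp_all [emb2, Fin.ext_iff]

lemma emb1_ne_emb2 (z : Fin a ⊕ Fin a) (w : Fin b ⊕ Fin b) : emb1 b z ≠ emb2 a w := by
  rcases z with i | i <;> rcases w with j | j <;>
    simp [emb1, emb2, Fin.ext_iff] <;> omega

lemma emb_surj (w : Fin (a + b) ⊕ Fin (a + b)) :
    (∃ z, w = emb1 b z) ∨ (∃ z, w = emb2 a z) := by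
  rcases w with i | i
  · refine Fin.addCases (motive := fun i => (∃ z, (Sum.inl i : Fin (a+b) ⊕ Fin (a+b)) = emb1 b z) ∨ (∃ z, (Sum.inl i : Fin (a+b) ⊕ Fin (a+b)) = emb2 a z)) ?_ ?_ i
    · exact fun i => Or.inl ⟨Sum.inl i, rfl⟩
    · exact fun i => Or.inr ⟨Sum.inl i, rfl⟩
  · refine Fin.addCases (motive := fun i => (∃ z, (Sum.inr i : Fin (a+b) ⊕ Fin (a+b)) = emb1 b z) ∨ (∃ z, (Sum.inr i : Fin (a+b) ⊕ Fin (a+b)) = emb2 a z)) ?_ ?_ i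
    · exact fun i => Or.inl ⟨Sum.inr i, rfl⟩
    · exact fun i => Or.inr ⟨Sum.inr i, rfl⟩

variable (g : (Fin (a + b) ⊕ Fin (a + b)) ≃ Fin (2 * (a + b)))

def bset : Finset (Fin (2 * (a + b))) :=
  Finset.image (fun z : Fin a ⊕ Fin a => g (emb1 b z)) Finset.univ

lemma bset_card : (bset g).card = 2 * a := by
  rw [bset, Finset.card_image_of_injective _ (show Injective (fun z : Fin a ⊕ Fin a => g (emb1 b z)) from g.injective.comp emb1_inj)]
  simp [two_mul]

lemma mem_bset (z : Fin a ⊕ Fin a) : g (emb1 b z) ∈ bset g :=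
  Finset.mem_image_of_mem _ (Finset.mem_univ z)

lemma mem_bsetc (w : Fin b ⊕ Fin b) : g (emb2 a w) ∈ (bset g)ᶜ := by
  simp only [Finset.mem_compl, bset, Finset.mem_image]
  rintro ⟨z, -, hz⟩
  exact emb1_ne_emb2 z w (g.injective hz)

lemma bsetc_card : (bset g)ᶜ.card = 2 * b := by
  rw [Finset.card_compl, bset_card]
  simp; omega

def f1 (z : Fin a ⊕ Fin a) : Fin (2 * a) :=
  ((bset g).orderIsoOfFin (bset_card g)).symm ⟨g (emb1 b z), mem_bset g z⟩

def f2 (z : Fin b ⊕ Fin b) : Fin (2 * b) :=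
  (((bset g)ᶜ).orderIsoOfFin (bsetc_card g)).symm ⟨g (emb2 a z), mem_bsetc g z⟩

lemma f1_lt_iff (z z' : Fin a ⊕ Fin a) :
    f1 g z < f1 g z' ↔ g (emb1 b z) < g (emb1 b z') := by
  rw [f1, f1, OrderIso.lt_iff_lt]; exact Subtype.mk_lt_mk

lemma f2_lt_iff (z z' : Fin b ⊕ Fin b) :
    f2 g z < f2 g z' ↔ g (emb2 a z) < g (emb2 a z') := by
  rw [f2, f2, OrderIso.lt_iff_lt]; exact Subtype.mk_lt_mk

lemma f1_val (z : Fin a ⊕ Fin a) :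
    (g (emb1 b z) : Fin (2 * (a + b))) = (bset g).orderEmbOfFin (bset_card g) (f1 g z) := by
  rw [← Finset.coe_orderIsoOfFin_apply, f1, OrderIso.apply_symm_apply]

lemma f2_val (z : Fin b ⊕ Fin b) :
    (g (emb2 a z) : Fin (2 * (a + b))) = ((bset g)ᶜ).orderEmbOfFin (bsetc_card g) (f2 g z) := by
  rw [← Finset.coe_orderIsoOfFin_apply, f2, OrderIso.apply_symm_apply]

lemma f1_bij : Bijective (f1 g) := by
  rw [Fintype.bijective_iff_injective_and_card]
  constructor
  · intro z z' h
    apply emb1_inj; apply g.injective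
    have := congrArg (((bset g).orderIsoOfFin (bset_card g))) h
    simpa [f1, Subtype.ext_iff] using this
  · simp [two_mul]

lemma f2_bij : Bijective (f2 g) := by
  rw [Fintype.bijective_iff_injective_and_card]
  constructor
  · intro z z' h
    apply emb2_inj; apply g.injective
    have := congrArg ((((bset g)ᶜ).orderIsoOfFin (bsetc_card g))) h
    simpa [f2, Subtype.ext_iff] using this
  · simp [two_mul]

end Inj


section Key
variable {a b : ℕ}

lemma castAdd_lt_iff (i j : Fin a) : Fin.castAdd b i < Fin.castAdd b j ↔ i < j :=
  Iff.rfl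

lemma natAdd_lt_iff (i j : Fin b) : Fin.natAdd a i < Fin.natAdd a j ↔ i < j := by
  rw [Fin.lt_def, Fin.lt_def]
  simp only [Fin.coe_natAdd]
  omega

lemma nstar_key (a b : ℕ) :
    NstarCount (a + b) ≤
      NstarCount a * NstarCount b * (2 * (a + b)).choose (2 * a) := by
  classical
  set T := {g : (Fin (a+b) ⊕ Fin (a+b)) ≃ Fin (2 * (a+b)) //
    (∀ j, g (Sum.inr j) < g (Sum.inl j)) ∧
    (∀ i j, i < j → g (Sum.inl i) < g (Sum.inl j) → g (Sum.inr i) < g (Sum.inr j))} with hT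
  set Ta := {g : (Fin a ⊕ Fin a) ≃ Fin (2 * a) //
    (∀ j, g (Sum.inr j) < g (Sum.inl j)) ∧
    (∀ i j, i < j → g (Sum.inl i) < g (Sum.inl j) → g (Sum.inr i) < g (Sum.inr j))} with hTa
  set Tb := {g : (Fin b ⊕ Fin b) ≃ Fin (2 * b) //
    (∀ j, g (Sum.inr j) < g (Sum.inl j)) ∧
    (∀ i j, i < j → g (Sum.inl i) < g (Sum.inl j) → g (Sum.inr i) < g (Sum.inr j))} with hTb
  set Sets := {S : Finset (Fin (2 * (a+b))) // S.card = 2 * a} with hSets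
  -- the map
  have cond1 : ∀ x : T, (∀ j, (Equiv.ofBijective (f1 x.1) (f1_bij x.1)) (Sum.inr j) <
      (Equiv.ofBijective (f1 x.1) (f1_bij x.1)) (Sum.inl j)) ∧
      (∀ i j, i < j → (Equiv.ofBijective (f1 x.1) (f1_bij x.1)) (Sum.inl i) <
        (Equiv.ofBijective (f1 x.1) (f1_bij x.1)) (Sum.inl j) →
        (Equiv.ofBijective (f1 x.1) (f1_bij x.1)) (Sum.inr i) <
        (Equiv.ofBijective (f1 x.1) (f1_bij x.1)) (Sum.inr j)) := by
    rintro ⟨g, hg1, hg2⟩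
    constructor
    · intro j
      show f1 g (Sum.inr j) < f1 g (Sum.inl j)
      rw [f1_lt_iff]
      exact hg1 _
    · intro i j hij h
      have h' : f1 g (Sum.inl i) < f1 g (Sum.inl j) := h
      show f1 g (Sum.inr i) < f1 g (Sum.inr j)
      rw [f1_lt_iff] at h' ⊢
      exact hg2 _ _ ((castAdd_lt_iff (b := b) i j).2 hij) h'
  have cond2 : ∀ x : T, (∀ j, (Equiv.ofBijective (f2 x.1) (f2_bij x.1)) (Sum.inr j) <
      (Equiv.ofBijective (f2 x.1) (f2_bij x.1)) (Sum.inl j)) ∧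
      (∀ i j, i < j → (Equiv.ofBijective (f2 x.1) (f2_bij x.1)) (Sum.inl i) <
        (Equiv.ofBijective (f2 x.1) (f2_bij x.1)) (Sum.inl j) →
        (Equiv.ofBijective (f2 x.1) (f2_bij x.1)) (Sum.inr i) <
        (Equiv.ofBijective (f2 x.1) (f2_bij x.1)) (Sum.inr j)) := by
    rintro ⟨g, hg1, hg2⟩
    constructor
    · intro j
      show f2 g (Sum.inr j) < f2 g (Sum.inl j)
      rw [f2_lt_iff]
      exact hg1 _
    · intro i j hij h
      have h' : f2 g (Sum.inl i) < f2 g (Sum.inl j) := h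
      show f2 g (Sum.inr i) < f2 g (Sum.inr j)
      rw [f2_lt_iff] at h' ⊢
      exact hg2 _ _ ((natAdd_lt_iff (a := a) i j).2 hij) h'
  set Φ : T → Ta × Tb × Sets := fun x =>
    (⟨Equiv.ofBijective (f1 x.1) (f1_bij x.1), cond1 x⟩,
     ⟨Equiv.ofBijective (f2 x.1) (f2_bij x.1), cond2 x⟩,
     ⟨bset x.1, bset_card x.1⟩) with hΦ
  have hinj : Function.Injective Φ := by
    rintro ⟨g, hg⟩ ⟨g', hg'⟩ h
    rw [hΦ, Prod.ext_iff, Prod.ext_iff] at h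
    obtain ⟨h1, h2, h3⟩ := h
    rw [Subtype.ext_iff] at h1 h2 h3
    have hS : bset g = bset g' := h3
    have hf1 : ∀ z, f1 g z = f1 g' z := fun z => DFunLike.congr_fun h1 z
    have hf2 : ∀ z, f2 g z = f2 g' z := fun z => DFunLike.congr_fun h2 z
    have hScompl : (bset g)ᶜ = (bset g')ᶜ := by rw [hS]
    have hemb : ∀ (p : (bset g).card = 2*a) (p' : (bset g').card = 2*a) (i : Fin (2*a)),
        (bset g).orderEmbOfFin p i = (bset g').orderEmbOfFin p' i := by
      rw [hS]; intros; rfl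
    have hembc : ∀ (p : (bset g)ᶜ.card = 2*b) (p' : (bset g')ᶜ.card = 2*b) (i : Fin (2*b)),
        ((bset g)ᶜ).orderEmbOfFin p i = ((bset g')ᶜ).orderEmbOfFin p' i := by
      rw [hScompl]; intros; rfl
    have hval1 : ∀ z, g (emb1 b z) = g' (emb1 b z) := by
      intro z
      rw [f1_val g z, f1_val g' z, hf1 z]
      exact hemb _ _ _
    have hval2 : ∀ z, g (emb2 a z) = g' (emb2 a z) := by
      intro z
      rw [f2_val g z, f2_val g' z, hf2 z]
      exact hembc _ _ _
    apply Subtype.ext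
    apply Equiv.ext
    intro w
    rcases emb_surj w with ⟨z, rfl⟩ | ⟨z, rfl⟩
    · exact hval1 z
    · exact hval2 z
  calc NstarCount (a + b) = Nat.card T := rfl
    _ ≤ Nat.card (Ta × Tb × Sets) := Nat.card_le_card_of_injective Φ hinj
    _ = NstarCount a * (NstarCount b * Nat.card Sets) := by
        rw [Nat.card_prod, Nat.card_prod]; rfl
    _ = NstarCount a * NstarCount b * (2 * (a + b)).choose (2 * a) := by
        rw [hSets, Nat.card_eq_fintype_card, Fintype.card_finset_len, Fintype.card_fin,
          mul_assoc]

end Key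


lemma fekete_rpow (q : ℕ → ℝ) (hpos : ∀ k, 1 ≤ k → 0 < q k) (hle1 : ∀ k, 1 ≤ k → q k ≤ 1)
    (hsub : ∀ a b, 1 ≤ a → 1 ≤ b → q (a + b) ≤ q a * q b) :
    Filter.Tendsto (fun k : ℕ => q k ^ ((1:ℝ) / (k : ℝ))) Filter.atTop
      (nhds (⨅ k : ℕ, q (k+1) ^ ((1:ℝ) / ((k:ℝ)+1)))) := by
  set f : ℕ → ℝ := fun k => q k ^ ((1:ℝ)/(k:ℝ)) with hf
  have hfk : ∀ k : ℕ, f (k+1) = q (k+1) ^ ((1:ℝ)/((k:ℝ)+1)) := by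
    intro k; rw [hf]; push_cast; ring_nf
  have hiInf : (⨅ k : ℕ, q (k+1) ^ ((1:ℝ)/((k:ℝ)+1))) = ⨅ k : ℕ, f (k+1) := by
    exact congrArg _ (funext fun k => (hfk k).symm)
  rw [hiInf]
  have hbdd : BddBelow (Set.range fun k : ℕ => f (k+1)) := by
    refine ⟨0, ?_⟩
    rintro x ⟨k, rfl⟩
    exact Real.rpow_nonneg (hpos (k+1) (by omega)).le _
  rw [tendsto_order]
  constructor
  · intro x hx
    filter_upwards [eventually_ge_atTop 1] with k hk
    obtain ⟨k', rfl⟩ : ∃ m, k = m + 1 := ⟨k - 1, by omega⟩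
    exact lt_of_lt_of_le hx (ciInf_le hbdd k')
  · intro x hx
    obtain ⟨s', hs'⟩ := exists_lt_of_ciInf_lt hx
    set s := s' + 1 with hsdef
    have hs1 : 1 ≤ s := by omega
    have hqs : 0 < q s := hpos s hs1
    -- iterated submultiplicativity
    have hpow : ∀ t r : ℕ, 1 ≤ r → q (s * t + r) ≤ q s ^ t * q r := by
      intro t
      induction t with
      | zero => intro r hr; simpa using le_refl (q r)
      | succ t ih =>
        intro r hr
        calc q (s * (t+1) + r) = q (s + (s * t + r)) := by ring_nf
          _ ≤ q s * q (s * t + r) := hsub _ _ hs1 (by omega)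
          _ ≤ q s * (q s ^ t * q r) := mul_le_mul_of_nonneg_left (ih r hr) hqs.le
          _ = q s ^ (t+1) * q r := by ring
    -- the main pointwise bound
    have hbound : ∀ k : ℕ, s ≤ k → f k ≤ q s ^ (((k / s - 1 : ℕ) : ℝ) / (k : ℝ)) := by
      intro k hk
      have hk1 : 1 ≤ k := le_trans hs1 hk
      have hds : s * (k / s) + k % s = k := Nat.div_add_mod k s
      have h1 : 1 ≤ k / s := (Nat.one_le_div_iff (by omega)).2 hk
      obtain ⟨t, ht⟩ : ∃ t, k / s = t + 1 := ⟨k / s - 1, by omega⟩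
      have htk : k / s - 1 = t := by omega
      have hdecomp : s * t + (k % s + s) = k := by
        rw [ht] at hds
        have hexp : s * (t + 1) = s * t + s := by ring
        omega
      have hq1 : q k ≤ q s ^ t * q (k % s + s) := by
        have h := hpow t (k % s + s) (by omega)
        rwa [hdecomp] at h
      have hq2 : q k ≤ q s ^ t := by
        refine hq1.trans ?_
        have := hle1 (k % s + s) (by omega)
        nlinarith [pow_nonneg hqs.le t, hpos (k % s + s) (by omega)]
      calc f k = q k ^ ((1:ℝ)/(k:ℝ)) := rfl
        _ ≤ (q s ^ t) ^ ((1:ℝ)/(k:ℝ)) :=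
            Real.rpow_le_rpow (hpos k hk1).le hq2 (by positivity)
        _ = q s ^ (((k / s - 1 : ℕ) : ℝ) / (k : ℝ)) := by
            rw [← Real.rpow_natCast (q s) t, ← Real.rpow_mul hqs.le, htk]
            ring_nf
    -- limit of the exponent
    have hu : Tendsto (fun k : ℕ => ((k / s - 1 : ℕ) : ℝ) / (k : ℝ)) atTop
        (nhds ((1:ℝ)/(s:ℝ))) := by
      have hlow : Tendsto (fun k : ℕ => (1:ℝ)/(s:ℝ) - 2/(k:ℝ)) atTop (nhds ((1:ℝ)/(s:ℝ))) := by
        have := (tendsto_const_div_atTop_nhds_zero_nat (2:ℝ))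
        simpa using tendsto_const_nhds.sub this
      refine tendsto_of_tendsto_of_tendsto_of_le_of_le' hlow tendsto_const_nhds ?_ ?_
      · filter_upwards [eventually_ge_atTop s] with k hk
        have hk1 : 1 ≤ k := le_trans hs1 hk
        have hkR : (0:ℝ) < (k:ℝ) := by exact_mod_cast hk1
        have hsR : (0:ℝ) < (s:ℝ) := by exact_mod_cast hs1
        rw [sub_le_iff_le_add, ← add_div, div_le_div_iff₀ hsR hkR]
        have hds : s * (k / s) + k % s = k := Nat.div_add_mod k s
        have h1 : 1 ≤ k / s := (Nat.one_le_div_iff (by omega)).2 hk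
        have hnat : k ≤ ((k / s - 1 : ℕ) + 2) * s := by
          have hexp : (k / s - 1 + 2) * s = s * (k / s) + s := by
            have : k / s - 1 + 2 = k / s + 1 := by omega
            rw [this]; ring
          have hms : k % s < s := Nat.mod_lt k (by omega)
          omega
        calc (1:ℝ) * (k:ℝ) = (k:ℝ) := by ring
          _ ≤ (((k / s - 1 : ℕ) + 2 : ℕ) : ℝ) * (s:ℝ) := by
              exact_mod_cast Nat.cast_le.2 hnat
          _ = (((k / s - 1 : ℕ) : ℝ) + 2) * (s:ℝ) := by push_cast; ring
      · filter_upwards [eventually_ge_atTop s] with k hk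
        have hk1 : 1 ≤ k := le_trans hs1 hk
        have hkR : (0:ℝ) < (k:ℝ) := by exact_mod_cast hk1
        have hsR : (0:ℝ) < (s:ℝ) := by exact_mod_cast hs1
        rw [div_le_div_iff₀ hkR hsR]
        have hnat : (k / s - 1) * s ≤ k :=
          le_trans (Nat.mul_le_mul_right s (Nat.sub_le _ _)) (Nat.div_mul_le_self k s)
        calc ((k / s - 1 : ℕ) : ℝ) * (s:ℝ) ≤ (k:ℝ) := by exact_mod_cast hnat
          _ = (1:ℝ) * (k:ℝ) := by ring
    -- conclude
    have hT : Tendsto (fun k : ℕ => q s ^ (((k / s - 1 : ℕ) : ℝ) / (k : ℝ))) atTop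
        (nhds (q s ^ ((1:ℝ)/(s:ℝ)))) :=
      Filter.Tendsto.rpow tendsto_const_nhds hu (Or.inl hqs.ne')
    have hfsx : q s ^ ((1:ℝ)/(s:ℝ)) < x := by
      exact hs'
    have hev := hT.eventually_lt_const hfsx
    filter_upwards [hev, eventually_ge_atTop s] with k h1 h2
    exact lt_of_le_of_lt (hbound k h2) h1

lemma q_submult (a b : ℕ) :
    (NstarCount (a+b) : ℝ) / (Nat.factorial (2*(a+b))) ≤
    (NstarCount a : ℝ) / (Nat.factorial (2*a)) * ((NstarCount b : ℝ) / (Nat.factorial (2*b))) := by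
  have hkey := nstar_key a b
  have hch : (2*(a+b)).choose (2*a) * (2*a).factorial * (2*b).factorial
      = (2*(a+b)).factorial := by
    have h := Nat.choose_mul_factorial_mul_factorial (show 2*a ≤ 2*(a+b) by omega)
    have h2 : 2*(a+b) - 2*a = 2*b := by omega
    rwa [h2] at h
  have hnat : NstarCount (a+b) * ((2*a).factorial * (2*b).factorial) ≤
      NstarCount a * NstarCount b * (2*(a+b)).factorial := by
    calc NstarCount (a+b) * ((2*a).factorial * (2*b).factorial)
        ≤ (NstarCount a * NstarCount b * (2*(a+b)).choose (2*a)) *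
            ((2*a).factorial * (2*b).factorial) := Nat.mul_le_mul_right _ hkey
      _ = NstarCount a * NstarCount b *
            ((2*(a+b)).choose (2*a) * (2*a).factorial * (2*b).factorial) := by ring
      _ = NstarCount a * NstarCount b * (2*(a+b)).factorial := by rw [hch]
  rw [div_mul_div_comm, div_le_div_iff₀
    (by exact_mod_cast Nat.factorial_pos _)
    (by positivity)]
  calc (NstarCount (a+b) : ℝ) * ((2*a).factorial * (2*b).factorial)
      ≤ (NstarCount a * NstarCount b * (2*(a+b)).factorial : ℕ) := by exact_mod_cast hnat
    _ = (NstarCount a : ℝ) * NstarCount b * (2*(a+b)).factorial := by push_cast; ring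

theorem Qstar_submultiplicative :
    (∀ k₁ k₂ : ℕ, 1 ≤ k₁ → 1 ≤ k₂ →
      (NstarCount (k₁ + k₂) : ℝ) / (Nat.factorial (2 * (k₁ + k₂))) ≤
      (NstarCount k₁ : ℝ) / (Nat.factorial (2 * k₁)) *
        ((NstarCount k₂ : ℝ) / (Nat.factorial (2 * k₂)))) ∧
    Filter.Tendsto
      (fun k : ℕ => ((NstarCount k : ℝ) / (Nat.factorial (2 * k))) ^ ((1 : ℝ) / (k : ℝ)))
      Filter.atTop
      (nhds (⨅ k : ℕ,
        ((NstarCount (k + 1) : ℝ) / (Nat.factorial (2 * (k + 1)))) ^ ((1 : ℝ) / ((k : ℝ) + 1)))) := by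
  constructor
  · intro k₁ k₂ _ _
    exact q_submult k₁ k₂
  · refine fekete_rpow (fun k => (NstarCount k : ℝ) / (Nat.factorial (2*k))) ?_ ?_ ?_
    · intro k _
      have h1 : (0:ℝ) < NstarCount k := by exact_mod_cast nstar_pos k
      have h2 : (0:ℝ) < (Nat.factorial (2*k) : ℝ) := by exact_mod_cast Nat.factorial_pos _
      exact div_pos h1 h2
    · intro k _
      rw [div_le_one (by exact_mod_cast Nat.factorial_pos (2*k))]
      exact_mod_cast nstar_le k
    · intro a b _ _
      exact q_submult a b
end

section
/- Let π, σ ∈ S_n with E(π) ⊋ E(σ) (strict containment). Then there exists a position p ∈ [n−1] such that σ(p) > σ(p+1) (i.e. (σ(p), σ(p+1)) is an adjacent inversion of σ) and π⁻¹(σ(p+1)) < π⁻¹(σ(p)) (i.e. the pair (σ(p+1), σ(p)) belongs to E(π)). -/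
/-- The non-inversion set `E(ω) = {(i,j) : i < j, ω⁻¹(i) < ω⁻¹(j)}`. -/
def NonInv {n : ℕ} (ω : Equiv.Perm (Fin n)) : Set (Fin n × Fin n) :=
  {p | p.1 < p.2 ∧ ω⁻¹ p.1 < ω⁻¹ p.2}

theorem exists_adjacent_inversion (n : ℕ) (π σ : Equiv.Perm (Fin n))
    (h : NonInv σ ⊂ NonInv π) :
    ∃ p q : Fin n, (p : ℕ) + 1 = (q : ℕ) ∧ σ q < σ p ∧ π⁻¹ (σ q) < π⁻¹ (σ p) := by
  have hsub : NonInv σ ⊆ NonInv π := h.1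
  obtain ⟨⟨i₀, j₀⟩, hmem, hnot⟩ := Set.exists_of_ssubset h
  obtain ⟨hij₀, hπ₀⟩ := hmem
  have hσ₀ : σ⁻¹ j₀ < σ⁻¹ i₀ := by
    rcases lt_trichotomy (σ⁻¹ j₀) (σ⁻¹ i₀) with h1 | h1 | h1
    · exact h1
    · exact absurd (σ⁻¹.injective h1.symm) (ne_of_lt hij₀)
    · exact absurd ⟨hij₀, h1⟩ hnot
  -- strong induction on the gap of positions in σ
  have key : ∀ g : ℕ, ∀ i j : Fin n, i < j → π⁻¹ i < π⁻¹ j → σ⁻¹ j < σ⁻¹ i →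
      ((σ⁻¹ i : Fin n) : ℕ) - ((σ⁻¹ j : Fin n) : ℕ) = g →
      ∃ p q : Fin n, (p : ℕ) + 1 = (q : ℕ) ∧ σ q < σ p ∧ π⁻¹ (σ q) < π⁻¹ (σ p) := by
    intro g
    induction g using Nat.strong_induction_on with
    | _ g IH =>
      intro i j hij hπ hσ hg
      have hab : ((σ⁻¹ j : Fin n) : ℕ) < ((σ⁻¹ i : Fin n) : ℕ) := hσ
      rcases Nat.lt_or_ge 1 g with hg2 | hg1
      · -- gap ≥ 2 : look at position a+1
        have hblt : ((σ⁻¹ i : Fin n) : ℕ) < n := (σ⁻¹ i).isLt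
        have hc : ((σ⁻¹ j : Fin n) : ℕ) + 1 < n := by omega
        set c : Fin n := ⟨((σ⁻¹ j : Fin n) : ℕ) + 1, hc⟩ with hcdef
        set z := σ c with hzdef
        have hzc : σ⁻¹ z = c := Equiv.symm_apply_apply σ c
        have hcb : (c : ℕ) < ((σ⁻¹ i : Fin n) : ℕ) := by show ((σ⁻¹ j : Fin n) : ℕ) + 1 < ((σ⁻¹ i : Fin n) : ℕ); omega
        have hzi : z ≠ i := by
          intro hzi
          have : c = σ⁻¹ i := by rw [← hzc, hzi]
          rw [← this] at hcb; omega
        have hzj : z ≠ j := by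
          intro hzj
          have : c = σ⁻¹ j := by rw [← hzc, hzj]
          have : (c : ℕ) = ((σ⁻¹ j : Fin n) : ℕ) := by rw [this]
          simp [hcdef] at this
        rcases lt_trichotomy z i with hzlt | hzeq | hzgt
        · -- z < i : (z,i) ∈ NonInv σ so π⁻¹ z < π⁻¹ i; recurse on (z, j), gap 1
          have hmemσ : (⟨z, i⟩ : Fin n × Fin n) ∈ NonInv σ := by
            refine ⟨hzlt, ?_⟩
            rw [hzc]
            exact hcb
          have hπzi : π⁻¹ z < π⁻¹ i := (hsub hmemσ).2
          refine IH 1 (by omega) z j (lt_trans hzlt hij) (lt_trans hπzi hπ) ?_ ?_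
          · rw [hzc]; show ((σ⁻¹ j : Fin n) : ℕ) < (c : ℕ); simp [hcdef]
          · rw [hzc]; simp [hcdef]
        · exact absurd hzeq hzi
        · rcases lt_trichotomy z j with hzlt' | hzeq' | hzgt'
          · -- i < z < j
            rcases lt_or_ge (π⁻¹ z) (π⁻¹ j) with hπz | hπz
            · -- recurse on (z, j), gap 1
              refine IH 1 (by omega) z j hzlt' hπz ?_ ?_
              · rw [hzc]; show ((σ⁻¹ j : Fin n) : ℕ) < (c : ℕ); simp [hcdef]
              · rw [hzc]; simp [hcdef]
            · -- π⁻¹ j ≤ π⁻¹ z, in fact < ; recurse on (i, z), gap g-1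
              have hπjz : π⁻¹ j < π⁻¹ z :=
                lt_of_le_of_ne hπz (fun h1 => hzj (π⁻¹.injective h1).symm)
              refine IH (g - 1) (by omega) i z hzgt (lt_trans hπ hπjz) ?_ ?_
              · rw [hzc]; exact hcb
              · rw [hzc]; show ((σ⁻¹ i : Fin n) : ℕ) - (c : ℕ) = g - 1
                show ((σ⁻¹ i : Fin n) : ℕ) - (((σ⁻¹ j : Fin n) : ℕ) + 1) = g - 1; omega
          · exact absurd hzeq' hzj
          · -- j < z
            have hmemσ : (⟨j, z⟩ : Fin n × Fin n) ∈ NonInv σ := by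
              refine ⟨hzgt', ?_⟩
              rw [hzc]
              show ((σ⁻¹ j : Fin n) : ℕ) < (c : ℕ)
              simp [hcdef]
            have hπjz : π⁻¹ j < π⁻¹ z := (hsub hmemσ).2
            refine IH (g - 1) (by omega) i z (lt_trans hij hzgt') (lt_trans hπ hπjz) ?_ ?_
            · rw [hzc]; exact hcb
            · rw [hzc]; show ((σ⁻¹ i : Fin n) : ℕ) - (c : ℕ) = g - 1
              show ((σ⁻¹ i : Fin n) : ℕ) - (((σ⁻¹ j : Fin n) : ℕ) + 1) = g - 1; omega
      · -- gap ≤ 1, so gap = 1 : adjacent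
        have hg1' : g = 1 := by omega
        refine ⟨σ⁻¹ j, σ⁻¹ i, by omega, ?_, ?_⟩
        · rw [show ∀ x, σ (σ⁻¹ x) = x from fun x => σ.apply_symm_apply x, show ∀ x, σ (σ⁻¹ x) = x from fun x => σ.apply_symm_apply x]; exact hij
        · rw [show ∀ x, σ (σ⁻¹ x) = x from fun x => σ.apply_symm_apply x, show ∀ x, σ (σ⁻¹ x) = x from fun x => σ.apply_symm_apply x]; exact hπ
  exact key _ i₀ j₀ hij₀ hπ₀ hσ₀ rfl
end

section
/- Let π, σ ∈ S_n with π ⪯ σ in the weak Bruhat order, and let m ≤ n. Then π[1..m] ⪯ σ[1..m] in the weak Bruhat order on S_m. -/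
/-- `τ = ω[1..m]` : the characterization of the restriction. -/
def Chr {n m : ℕ} (h : m ≤ n) (ω : Equiv.Perm (Fin n)) (τ : Equiv.Perm (Fin m)) : Prop :=
  ∀ i j : Fin m, τ⁻¹ i < τ⁻¹ j ↔ ω⁻¹ (Fin.castLE h i) < ω⁻¹ (Fin.castLE h j)

lemma aux_le_apply {m : ℕ} {f : Fin m → Fin m} (hf : StrictMono f) : ∀ x, x ≤ f x := by
  have H : ∀ k : ℕ, ∀ hk : k < m, (⟨k, hk⟩ : Fin m) ≤ f ⟨k, hk⟩ := by
    intro k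
    induction k using Nat.strong_induction_on with
    | _ k ih =>
      intro hk
      by_contra hc
      push_neg at hc
      have h2 := hf hc
      have h3 := ih ((f ⟨k, hk⟩) : ℕ) (Fin.lt_def.mp hc) (f ⟨k, hk⟩).isLt
      rw [Fin.eta] at h3
      exact absurd h2 (not_lt.mpr h3)
  intro x
  have := H x.val x.isLt
  rwa [Fin.eta] at this

lemma chr_unique {n m : ℕ} (h : m ≤ n) {ω : Equiv.Perm (Fin n)} {τ₁ τ₂ : Equiv.Perm (Fin m)}
    (h1 : Chr h ω τ₁) (h2 : Chr h ω τ₂) : τ₁ = τ₂ := by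
  have hmono : StrictMono (fun x => τ₂⁻¹ (τ₁ x)) := by
    intro x y hxy
    refine (h2 (τ₁ x) (τ₁ y)).2 ((h1 (τ₁ x) (τ₁ y)).1 ?_)
    simpa using hxy
  have hmono2 : StrictMono (fun x => τ₁⁻¹ (τ₂ x)) := by
    intro x y hxy
    refine (h1 (τ₂ x) (τ₂ y)).2 ((h2 (τ₂ x) (τ₂ y)).1 ?_)
    simpa using hxy
  ext x
  have e1 : x ≤ τ₂⁻¹ (τ₁ x) := aux_le_apply hmono x
  have e2 : τ₂⁻¹ (τ₁ x) ≤ x := by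
    have := aux_le_apply hmono2 (τ₂⁻¹ (τ₁ x))
    simpa using this
  have hx : τ₂⁻¹ (τ₁ x) = x := le_antisymm e2 e1
  have : τ₁ x = τ₂ x := by
    calc τ₁ x = τ₂ (τ₂⁻¹ (τ₁ x)) := by simp
    _ = τ₂ x := by rw [hx]
  exact congrArg Fin.val this

lemma chr_exists {n m : ℕ} (h : m ≤ n) (ω : Equiv.Perm (Fin n)) :
    ∃ τ : Equiv.Perm (Fin m), Chr h ω τ := by
  set f : Fin m → Fin n := fun k => ω⁻¹ (Fin.castLE h k) with hf
  have hfinj : Function.Injective f := by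
    intro a b hab
    have := ω⁻¹.injective hab
    exact Fin.castLE_injective h this
  set s : Finset (Fin n) := Finset.univ.image f with hs
  have hcard : s.card = m := by
    rw [hs, Finset.card_image_of_injective _ hfinj, Finset.card_univ, Fintype.card_fin]
  let e := s.orderIsoOfFin hcard
  let g : Fin m → Fin m := fun k => e.symm ⟨f k, by simp [hs]⟩
  have hginj : Function.Injective g := by
    intro a b hab
    apply hfinj
    have := congrArg e hab
    simpa [g, e, Subtype.ext_iff] using this
  have hgbij : Function.Bijective g := Finite.injective_iff_bijective.mp hginj
  refine ⟨(Equiv.ofBijective g hgbij).symm, ?_⟩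
  intro i j
  have hτ : ∀ k, ((Equiv.ofBijective g hgbij).symm)⁻¹ k = g k := fun k => rfl
  rw [hτ, hτ]
  show e.symm _ < e.symm _ ↔ _
  rw [e.symm.lt_iff_lt]
  exact Iff.rfl

lemma chr_step {n m : ℕ} (h : m ≤ n) {ω₁ ω₂ : Equiv.Perm (Fin n)} {τ₁ τ₂ : Equiv.Perm (Fin m)}
    (hr : IsSimpleReduction ω₁ ω₂) (h1 : Chr h ω₁ τ₁) (h2 : Chr h ω₂ τ₂) :
    τ₂ = τ₁ ∨ IsSimpleReduction τ₁ τ₂ := by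
  obtain ⟨i, j, hij, hlt, hw⟩ := hr
  set a := ω₁ i with ha
  set b := ω₁ j with hb
  have hconj : Equiv.swap i j = ω₁⁻¹ * Equiv.swap a b * ω₁ := by
    have := Equiv.swap_apply_apply ω₁⁻¹ a b
    simpa [ha, hb] using this
  have hinv2 : ∀ x : Fin n, ω₂⁻¹ x = ω₁⁻¹ (Equiv.swap a b x) := by
    intro x
    rw [hw, mul_inv_rev]
    show Equiv.swap i j (ω₁⁻¹ x) = _
    rw [hconj]
    simp
  by_cases hbm : (b : ℕ) < m
  · by_cases ham : (a : ℕ) < m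
    · -- both entries small : a genuine simple reduction downstairs
      right
      set a' : Fin m := ⟨(a : ℕ), ham⟩ with ha'
      set b' : Fin m := ⟨(b : ℕ), hbm⟩ with hb'
      have hca : Fin.castLE h a' = a := rfl
      have hcb : Fin.castLE h b' = b := rfl
      have hswap : ∀ x : Fin m,
          Equiv.swap a b (Fin.castLE h x) = Fin.castLE h (Equiv.swap a' b' x) := by
        intro x
        by_cases hx1 : x = a'
        · subst hx1; rw [hca, Equiv.swap_apply_left, Equiv.swap_apply_left, hcb]
        · by_cases hx2 : x = b'
          · subst hx2; rw [hcb, Equiv.swap_apply_right, Equiv.swap_apply_right, hca]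
          · rw [Equiv.swap_apply_of_ne_of_ne hx1 hx2,
              Equiv.swap_apply_of_ne_of_ne
                (fun hc => hx1 (Fin.castLE_injective h (hca ▸ hc)))
                (fun hc => hx2 (Fin.castLE_injective h (hcb ▸ hc)))]
      have hfa : ω₁⁻¹ (Fin.castLE h a') = i := by rw [hca, ha]; simp
      have hfb : ω₁⁻¹ (Fin.castLE h b') = j := by rw [hcb, hb]; simp
      have hpq : τ₁⁻¹ a' < τ₁⁻¹ b' :=
        (h1 a' b').2 (by rw [hfa, hfb]; exact Fin.lt_def.mpr (by omega))
      have hq1 : (τ₁⁻¹ a' : ℕ) + 1 = (τ₁⁻¹ b' : ℕ) := by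
        by_contra hc
        have hplt : (τ₁⁻¹ a' : ℕ) + 1 < (τ₁⁻¹ b' : ℕ) := by
          have := Fin.lt_def.mp hpq; omega
        have hrlt : (τ₁⁻¹ a' : ℕ) + 1 < m := lt_trans hplt (τ₁⁻¹ b').isLt
        have hr1 : τ₁⁻¹ (τ₁ ⟨(τ₁⁻¹ a' : ℕ) + 1, hrlt⟩) = ⟨(τ₁⁻¹ a' : ℕ) + 1, hrlt⟩ :=
          Equiv.symm_apply_apply τ₁ _
        have h1' := (h1 a' (τ₁ ⟨(τ₁⁻¹ a' : ℕ) + 1, hrlt⟩)).1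
          (by rw [hr1]; exact Fin.lt_def.mpr (Nat.lt_succ_self _))
        have h2' := (h1 (τ₁ ⟨(τ₁⁻¹ a' : ℕ) + 1, hrlt⟩) b').1
          (by rw [hr1]; exact Fin.lt_def.mpr hplt)
        rw [hfa] at h1'
        rw [hfb] at h2'
        have e1 := Fin.lt_def.mp h1'
        have e2 := Fin.lt_def.mp h2'
        omega
      have hτ2 : τ₂ = τ₁ * Equiv.swap (τ₁⁻¹ a') (τ₁⁻¹ b') := by
        refine chr_unique h h2 ?_
        intro x y
        have hconj' : Equiv.swap (τ₁⁻¹ a') (τ₁⁻¹ b') = τ₁⁻¹ * Equiv.swap a' b' * τ₁ := by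
          have := Equiv.swap_apply_apply τ₁⁻¹ a' b'
          simpa using this
        have key : ∀ x : Fin m,
            (τ₁ * Equiv.swap (τ₁⁻¹ a') (τ₁⁻¹ b'))⁻¹ x = τ₁⁻¹ (Equiv.swap a' b' x) := by
          intro x
          rw [mul_inv_rev]
          show Equiv.swap (τ₁⁻¹ a') (τ₁⁻¹ b') (τ₁⁻¹ x) = _
          rw [hconj']
          simp
        rw [key, key, h1, hinv2, hinv2, hswap, hswap]
      exact ⟨τ₁⁻¹ a', τ₁⁻¹ b', hq1, by
        simp only [Equiv.Perm.inv_def, Equiv.apply_symm_apply]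
        exact ⟨Fin.lt_def.mpr (Fin.lt_def.mp hlt), hτ2⟩⟩
    · -- b < m ≤ a : restriction unchanged (value order around i, i+1 preserved)
      left
      refine chr_unique h h2 ?_
      intro x y
      rw [h1, hinv2, hinv2]
      set b' : Fin m := ⟨(b : ℕ), hbm⟩ with hb'
      have hcb : Fin.castLE h b' = b := rfl
      have hfz : ∀ z : Fin m, z ≠ b' →
          Equiv.swap a b (Fin.castLE h z) = Fin.castLE h z := by
        intro z hz
        refine Equiv.swap_apply_of_ne_of_ne (fun hc => ?_) (fun hc => ?_)
        · have : ((Fin.castLE h z : Fin n) : ℕ) < m := z.isLt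
          rw [hc] at this; exact ham this
        · exact hz (Fin.castLE_injective h (hcb ▸ hc))
      have hfi : ∀ z : Fin m, ω₁⁻¹ (Fin.castLE h z) ≠ i := by
        intro z hc
        have : Fin.castLE h z = a := by
          rw [ha, ← hc]; simp
        have : ((Fin.castLE h z : Fin n) : ℕ) < m := z.isLt
        rw [‹Fin.castLE h z = a›] at this
        exact ham this
      have hfj : ∀ z : Fin m, z ≠ b' → ω₁⁻¹ (Fin.castLE h z) ≠ j := by
        intro z hz hc
        have : Fin.castLE h z = b := by rw [hb, ← hc]; simp
        exact hz (Fin.castLE_injective h (hcb ▸ this))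
      have hbj : ω₁⁻¹ (Fin.castLE h b') = j := by rw [hcb, hb]; simp
      have hbi : ω₁⁻¹ (Equiv.swap a b (Fin.castLE h b')) = i := by
        rw [hcb, Equiv.swap_apply_right, ha]; simp
      by_cases hx : x = b' <;> by_cases hy : y = b'
      · subst hx; subst hy; simp
      · subst hx
        rw [hbj, hbi, hfz y hy, Fin.lt_def, Fin.lt_def]
        have h1' := hfi y
        have h2' := hfj y hy
        rw [← Fin.val_ne_iff] at h1' h2'
        omega
      · subst hy
        rw [hbj, hbi, hfz x hx, Fin.lt_def, Fin.lt_def]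
        have h1' := hfi x
        have h2' := hfj x hx
        rw [← Fin.val_ne_iff] at h1' h2'
        omega
      · rw [hfz x hx, hfz y hy]
  · -- both entries ≥ m : restriction unchanged
    left
    have ham : ¬ (a : ℕ) < m := by
      intro hc
      exact hbm (lt_trans (Fin.lt_def.mp hlt) hc)
    refine chr_unique h h2 ?_
    intro x y
    rw [h1, hinv2, hinv2]
    have hfz : ∀ z : Fin m, Equiv.swap a b (Fin.castLE h z) = Fin.castLE h z := by
      intro z
      refine Equiv.swap_apply_of_ne_of_ne (fun hc => ?_) (fun hc => ?_)
      · have : ((Fin.castLE h z : Fin n) : ℕ) < m := z.isLt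
        rw [hc] at this; exact ham this
      · have : ((Fin.castLE h z : Fin n) : ℕ) < m := z.isLt
        rw [hc] at this; exact hbm this
    rw [hfz, hfz]

theorem weak_bruhat_restriction (n m : ℕ) (h : m ≤ n)
    (π σ : Equiv.Perm (Fin n)) (πm σm : Equiv.Perm (Fin m))
    -- `πm = π[1..m]`: obtained from `π` by deleting the entries `m+1, …, n`,
    -- characterized by `π[1..m]⁻¹(i) < π[1..m]⁻¹(j) ↔ π⁻¹(i) < π⁻¹(j)` for `i, j ≤ m`
    (hπm : ∀ i j : Fin m, πm⁻¹ i < πm⁻¹ j ↔ π⁻¹ (Fin.castLE h i) < π⁻¹ (Fin.castLE h j))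
    -- `σm = σ[1..m]`
    (hσm : ∀ i j : Fin m, σm⁻¹ i < σm⁻¹ j ↔ σ⁻¹ (Fin.castLE h i) < σ⁻¹ (Fin.castLE h j))
    (hw : WeakLE π σ) :
    WeakLE πm σm := by
  have key : ∀ τ : Equiv.Perm (Fin m), Chr h σ τ →
      Relation.ReflTransGen IsSimpleReduction τ πm := by
    refine Relation.ReflTransGen.head_induction_on
      (motive := fun x (_ : Relation.ReflTransGen IsSimpleReduction x π) =>
        ∀ τ : Equiv.Perm (Fin m), Chr h x τ →
          Relation.ReflTransGen IsSimpleReduction τ πm) hw ?_ ?_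
    · intro τ hτ
      have : τ = πm := chr_unique h hτ hπm
      rw [this]
    · intro x c hxc _ ih τ hτ
      obtain ⟨τc, hτc⟩ := chr_exists h c
      rcases chr_step h hxc hτ hτc with heq | hstep
      · rw [← heq]; exact ih τc hτc
      · exact (ih τc hτc).head hstep
  exact key σm hσm
end

section
/- Let π, σ ∈ S_n with π ⪯ σ in the weak Bruhat order. Then for every integer j with 0 ≤ j ≤ n − 1, the position of the element n − j satisfies π⁻¹(n − j) ≥ σ⁻¹(n − j) − j. -/
private def Sset {n : ℕ} (x : Fin n) (ω : Equiv.Perm (Fin n)) : Finset (Fin n) :=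
  Finset.univ.filter (fun y => y ≠ x ∧ (ω⁻¹ y < ω⁻¹ x ∨ x < y))

private lemma swap_mono {n : ℕ} {i j a b : Fin n} (hij : (i:ℕ)+1 = j) (hab : a < b)
    (hne : ¬(a = i ∧ b = j)) : Equiv.swap i j a < Equiv.swap i j b := by
  have hab' : (a:ℕ) < (b:ℕ) := hab
  rcases eq_or_ne a i with rfl | hai
  · rcases eq_or_ne b j with rfl | hbj
    · exact absurd ⟨rfl, rfl⟩ hne
    · rw [Equiv.swap_apply_left, Equiv.swap_apply_of_ne_of_ne hab.ne' hbj]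
      have : (b:ℕ) ≠ (j:ℕ) := fun h => hbj (Fin.ext h)
      rw [Fin.lt_def]; omega
  · rcases eq_or_ne a j with rfl | haj
    · have hbi : b ≠ i := by intro h; subst h; omega
      rw [Equiv.swap_apply_right, Equiv.swap_apply_of_ne_of_ne hbi hab.ne']
      rw [Fin.lt_def]; omega
    · rcases eq_or_ne b i with rfl | hbi
      · rw [Equiv.swap_apply_left, Equiv.swap_apply_of_ne_of_ne hab.ne haj]
        rw [Fin.lt_def]; omega
      · rcases eq_or_ne b j with rfl | hbj
        · rw [Equiv.swap_apply_right, Equiv.swap_apply_of_ne_of_ne hai hab.ne]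
          have : (a:ℕ) ≠ (i:ℕ) := fun h => hai (Fin.ext h)
          rw [Fin.lt_def]; omega
        · rw [Equiv.swap_apply_of_ne_of_ne hai haj,
            Equiv.swap_apply_of_ne_of_ne hbi hbj]
          exact hab

private lemma step_subset {n : ℕ} {x : Fin n} {ω₁ ω₂ : Equiv.Perm (Fin n)}
    (h : IsSimpleReduction ω₁ ω₂) : Sset x ω₁ ⊆ Sset x ω₂ := by
  obtain ⟨i, j, hij, hval, rfl⟩ := h
  intro y hy
  simp only [Sset, Finset.mem_filter, Finset.mem_univ, true_and] at hy ⊢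
  obtain ⟨hyx, hcase⟩ := hy
  refine ⟨hyx, ?_⟩
  rcases hcase with hlt | hgt
  · by_cases hxy : x < y
    · exact Or.inr hxy
    · left
      have hyx' : y < x := lt_of_le_of_ne (not_lt.mp hxy) hyx
      have hinv : (ω₁ * Equiv.swap i j)⁻¹ = Equiv.swap i j * ω₁⁻¹ := by
        rw [mul_inv_rev, Equiv.swap_inv]
      rw [hinv]
      simp only [Equiv.Perm.mul_apply]
      apply swap_mono hij hlt
      rintro ⟨ha, hb⟩
      -- then y = ω₁ i, x = ω₁ j, but ω₁ j < ω₁ i gives x < y, contradiction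
      have h1 : ω₁ (ω₁⁻¹ y) = y := ω₁.apply_symm_apply y
      have h2 : ω₁ (ω₁⁻¹ x) = x := ω₁.apply_symm_apply x
      rw [ha] at h1; rw [hb] at h2
      rw [← h1, ← h2] at hyx'
      exact absurd hval (not_lt.mpr hyx'.le)
  · exact Or.inr hgt

private lemma card_pos_filter {n : ℕ} (ω : Equiv.Perm (Fin n)) (x : Fin n) :
    (Finset.univ.filter (fun y => ω⁻¹ y < ω⁻¹ x)).card = (ω⁻¹ x : ℕ) := by
  have : Finset.univ.filter (fun y => ω⁻¹ y < ω⁻¹ x)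
      = (Finset.Iio (ω⁻¹ x)).map ω.toEmbedding := by
    ext y
    simp only [Finset.mem_filter, Finset.mem_univ, true_and, Finset.mem_map,
      Finset.mem_Iio, Equiv.coe_toEmbedding]
    constructor
    · intro h; exact ⟨ω⁻¹ y, h, ω.apply_symm_apply y⟩
    · rintro ⟨a, ha, rfl⟩; simpa using ha
  rw [this, Finset.card_map, Fin.card_Iio]

private lemma lower_bound {n : ℕ} (ω : Equiv.Perm (Fin n)) (x : Fin n) :
    (ω⁻¹ x : ℕ) ≤ (Sset x ω).card := by
  rw [← card_pos_filter ω x]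
  apply Finset.card_le_card
  intro y hy
  simp only [Finset.mem_filter, Finset.mem_univ, true_and] at hy
  simp only [Sset, Finset.mem_filter, Finset.mem_univ, true_and]
  refine ⟨?_, Or.inl hy⟩
  intro h; subst h; exact lt_irrefl _ hy

private lemma upper_bound {n : ℕ} (ω : Equiv.Perm (Fin n)) (x : Fin n) :
    (Sset x ω).card ≤ (ω⁻¹ x : ℕ) + (n - 1 - (x : ℕ)) := by
  have hsub : Sset x ω ⊆
      (Finset.univ.filter (fun y => ω⁻¹ y < ω⁻¹ x)) ∪ Finset.Ioi x := by
    intro y hy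
    simp only [Sset, Finset.mem_filter, Finset.mem_univ, true_and] at hy
    rcases hy.2 with h | h
    · exact Finset.mem_union_left _ (by simpa using h)
    · exact Finset.mem_union_right _ (Finset.mem_Ioi.mpr h)
  calc (Sset x ω).card ≤ _ := Finset.card_le_card hsub
    _ ≤ (Finset.univ.filter (fun y => ω⁻¹ y < ω⁻¹ x)).card + (Finset.Ioi x).card :=
        Finset.card_union_le _ _
    _ = (ω⁻¹ x : ℕ) + (n - 1 - (x : ℕ)) := by rw [card_pos_filter, Fin.card_Ioi]

/-- If `π ⪯ σ` then for `0 ≤ j ≤ n−1` the position of the element `n − j` in `π`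
is at least its position in `σ` minus `j`.  Here `x : Fin n` encodes the element
`n − j` of `[n]` (so its `1`-indexed value is `(x : ℕ) + 1 = n − j`), and positions
satisfy `σ⁻¹(n−j) ≤ π⁻¹(n−j) + j`. -/
theorem weak_bruhat_position_bound (n : ℕ) (π σ : Equiv.Perm (Fin n))
    (hw : WeakLE π σ) (j : ℕ) (hj : j ≤ n - 1) (x : Fin n) (hx : (x : ℕ) + 1 = n - j) :
    (σ⁻¹ x : ℕ) ≤ (π⁻¹ x : ℕ) + j := by
  have hmono : (Sset x σ).card ≤ (Sset x π).card := by
    induction hw with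
    | refl => exact le_refl _
    | tail _ hstep ih => exact le_trans ih (Finset.card_le_card (step_subset hstep))
  have hjx : n - 1 - (x : ℕ) = j := by omega
  calc (σ⁻¹ x : ℕ) ≤ (Sset x σ).card := lower_bound σ x
    _ ≤ (Sset x π).card := hmono
    _ ≤ (π⁻¹ x : ℕ) + (n - 1 - (x : ℕ)) := upper_bound π x
    _ = (π⁻¹ x : ℕ) + j := by rw [hjx]
end

section
/- Let n ≥ 1 and let B₁, …, B_n ⊆ [n] be sets such that for all i, j, k ∈ [n]: i ∉ B_i, and if i ∈ B_j and j ∈ B_k then i ∈ B_k. Then the number of permutations π ∈ S_n such that π⁻¹(j) < π⁻¹(i) for every i ∈ [n] and every j ∈ B_i is at least n! / ∏_{i=1}^n (|B_i| + 1); equivalently, #{π ∈ S_n : ∀ i, ∀ j ∈ B_i, π⁻¹(j) < π⁻¹(i)} · ∏_{i=1}^n (|B_i| + 1) ≥ n!. -/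
open Finset

namespace CountPermsAux

variable {n : ℕ}

/-- A "reversed linear extension" of the order `B` restricted to `S`:
a list whose toFinset is `S`, nodup, and whenever `a` appears before `b`, `a ∉ B b`. -/
def GoodL (B : Fin n → Finset (Fin n)) (S : Finset (Fin n)) (l : List (Fin n)) : Prop :=
  l.toFinset = S ∧ l.Pairwise (fun a b => a ≠ b ∧ a ∉ B b)

theorem GoodL.nodup {B : Fin n → Finset (Fin n)} {S l} (h : GoodL B S l) : l.Nodup :=
  h.2.imp fun h => h.1

instance instFiniteGoodL (B : Fin n → Finset (Fin n)) (S : Finset (Fin n)) :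
    Finite {l : List (Fin n) // GoodL B S l} :=
  Finite.of_injective (fun l => (⟨l.1, l.2.nodup⟩ : {l : List (Fin n) // l.Nodup}))
    (by intro a b h; exact Subtype.ext (by simpa using congrArg Subtype.val h))

noncomputable def eS (B : Fin n → Finset (Fin n)) (S : Finset (Fin n)) : ℕ :=
  Nat.card {l : List (Fin n) // GoodL B S l}

def MaxS (B : Fin n → Finset (Fin n)) (S : Finset (Fin n)) : Finset (Fin n) :=
  S.filter (fun m => ∀ k ∈ S, m ∉ B k)

theorem eS_empty (B : Fin n → Finset (Fin n)) : eS B (∅ : Finset (Fin n)) = 1 := by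
  have hnil : GoodL B ∅ ([] : List (Fin n)) := ⟨by simp, List.Pairwise.nil⟩
  haveI : Unique {l : List (Fin n) // GoodL B ∅ l} := by
    refine ⟨⟨⟨[], hnil⟩⟩, ?_⟩
    rintro ⟨l, hl⟩
    have : l = [] := by
      have := hl.1
      cases l with
      | nil => rfl
      | cons a t => simp at this
    exact Subtype.ext this
  simp [eS, Nat.card_unique]


theorem card_decomp (B : Fin n → Finset (Fin n)) (h1 : ∀ i, i ∉ B i)
    (S : Finset (Fin n)) (hS : S.Nonempty) :
    eS B S = ∑ m ∈ MaxS B S, eS B (S.erase m) := by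
  classical
  have key : Nat.card (Σ m : {m // m ∈ MaxS B S}, {t : List (Fin n) // GoodL B (S.erase m.1) t})
      = Nat.card {l : List (Fin n) // GoodL B S l} := by
    have hgood : ∀ p : (Σ m : {m // m ∈ MaxS B S},
        {t : List (Fin n) // GoodL B (S.erase m.1) t}), GoodL B S (p.1.1 :: p.2.1) := by
      intro p
      constructor
      · have hm := p.1.2
        simp only [MaxS, Finset.mem_filter] at hm
        simp only [List.toFinset_cons, p.2.2.1]
        rw [Finset.insert_erase hm.1]
      · rw [List.pairwise_cons]
        refine ⟨fun b hb => ?_, p.2.2.2⟩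
        have hbF : b ∈ S.erase p.1.1 := by rw [← p.2.2.1]; simpa using hb
        have hm := p.1.2
        simp only [MaxS, Finset.mem_filter] at hm
        exact ⟨fun h => (Finset.mem_erase.mp hbF).1 h.symm,
          hm.2 b (Finset.mem_of_mem_erase hbF)⟩
    apply Nat.card_eq_of_bijective (f := fun p => ⟨p.1.1 :: p.2.1, hgood p⟩)
    constructor
    · -- injective
      rintro ⟨⟨m, hm⟩, ⟨t, ht⟩⟩ ⟨⟨m', hm'⟩, ⟨t', ht'⟩⟩ h
      have h' : m :: t = m' :: t' := congrArg Subtype.val h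
      have hm2 : m = m' := (List.cons.injEq _ _ _ _ ▸ h').1
      have ht2 : t = t' := (List.cons.injEq _ _ _ _ ▸ h').2
      subst hm2
      subst ht2
      rfl
    · -- surjective
      rintro ⟨l, hl⟩
      obtain ⟨a, t, rfl⟩ : ∃ a t, l = a :: t := by
        cases l with
        | nil =>
          exfalso
          obtain ⟨x, hx⟩ := hS
          rw [← hl.1] at hx
          simp at hx
        | cons a t => exact ⟨a, t, rfl⟩
      have hpw := List.pairwise_cons.mp hl.2
      have hat : a ∉ t := fun hmem => (hpw.1 a hmem).1 rfl
      have htF : t.toFinset = S.erase a := by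
        have : S = insert a t.toFinset := by rw [← hl.1]; simp
        rw [this, Finset.erase_insert (by simp [hat])]
      have haS : a ∈ S := by rw [← hl.1]; simp
      have haM : a ∈ MaxS B S := by
        simp only [MaxS, Finset.mem_filter]
        refine ⟨haS, fun k hk hak => ?_⟩
        rw [← hl.1] at hk
        simp only [List.mem_toFinset, List.mem_cons] at hk
        rcases hk with rfl | hk
        · exact h1 k hak
        · exact (hpw.1 k hk).2 hak
      exact ⟨⟨⟨a, haM⟩, ⟨t, htF, hpw.2⟩⟩, rfl⟩
  rw [eS, ← key]
  haveI : ∀ m : {m // m ∈ MaxS B S}, Fintype {t : List (Fin n) // GoodL B (S.erase m.1) t} :=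
    fun m => Fintype.ofFinite _
  rw [Nat.card_eq_fintype_card, Fintype.card_sigma]
  rw [← Finset.sum_coe_sort (MaxS B S) (fun m => eS B (S.erase m))]
  congr 1
  funext m
  rw [eS, Nat.card_eq_fintype_card]


theorem cover (B : Fin n → Finset (Fin n)) (h1 : ∀ i, i ∉ B i)
    (h2 : ∀ i j k : Fin n, i ∈ B j → j ∈ B k → i ∈ B k)
    (S : Finset (Fin n)) {i : Fin n} (hi : i ∈ S) :
    ∃ m ∈ MaxS B S, i = m ∨ i ∈ B m := by
  classical
  set U := S.filter (fun k => i = k ∨ i ∈ B k) with hU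
  have hUne : U.Nonempty := ⟨i, by simp [hU, hi]⟩
  obtain ⟨m, hmU, hmax⟩ := U.exists_max_image (fun k => (B k).card) hUne
  simp only [hU, Finset.mem_filter] at hmU
  refine ⟨m, ?_, hmU.2⟩
  simp only [MaxS, Finset.mem_filter]
  refine ⟨hmU.1, fun k hk hmk => ?_⟩
  have hkU : k ∈ U := by
    simp only [hU, Finset.mem_filter]
    refine ⟨hk, Or.inr ?_⟩
    rcases hmU.2 with rfl | hiBm
    · exact hmk
    · exact h2 i m k hiBm hmk
  have hlt : (B m).card < (B k).card := by
    apply Finset.card_lt_card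
    rw [Finset.ssubset_iff_of_subset (fun j hj => h2 j m k hj hmk)]
    exact ⟨m, hmk, h1 m⟩
  exact absurd (hmax k hkU) (not_le.mpr hlt)


theorem sum_cover (B : Fin n → Finset (Fin n)) (h1 : ∀ i, i ∉ B i)
    (h2 : ∀ i j k : Fin n, i ∈ B j → j ∈ B k → i ∈ B k) (S : Finset (Fin n)) :
    S.card ≤ ∑ m ∈ MaxS B S, ((B m).card + 1) := by
  classical
  have hsub : S ⊆ (MaxS B S).biUnion (fun m => insert m (B m)) := by
    intro i hi
    obtain ⟨m, hm, h⟩ := cover B h1 h2 S hi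
    refine Finset.mem_biUnion.mpr ⟨m, hm, ?_⟩
    rcases h with rfl | h
    · exact Finset.mem_insert_self _ _
    · exact Finset.mem_insert_of_mem h
  calc S.card ≤ ((MaxS B S).biUnion (fun m => insert m (B m))).card :=
        Finset.card_le_card hsub
    _ ≤ ∑ m ∈ MaxS B S, (insert m (B m)).card := Finset.card_biUnion_le
    _ ≤ ∑ m ∈ MaxS B S, ((B m).card + 1) :=
        Finset.sum_le_sum fun m _ => Finset.card_insert_le _ _

theorem main (B : Fin n → Finset (Fin n)) (h1 : ∀ i, i ∉ B i)
    (h2 : ∀ i j k : Fin n, i ∈ B j → j ∈ B k → i ∈ B k) :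
    ∀ S : Finset (Fin n), (∀ i ∈ S, B i ⊆ S) →
      S.card.factorial ≤ eS B S * ∏ i ∈ S, ((B i).card + 1) := by
  classical
  intro S
  induction S using Finset.strongInduction with
  | _ S ih =>
    intro hdc
    rcases S.eq_empty_or_nonempty with rfl | hS
    · simp [eS_empty]
    obtain ⟨k, hk⟩ : ∃ k, S.card = k + 1 :=
      ⟨S.card - 1, (Nat.succ_pred_eq_of_pos (Finset.card_pos.mpr hS)).symm⟩
    set F := ∏ i ∈ S, ((B i).card + 1) with hF
    -- facts about each maximal element
    have herase : ∀ m ∈ MaxS B S, ∀ i ∈ S.erase m, B i ⊆ S.erase m := by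
      intro m hm i hi j hj
      simp only [MaxS, Finset.mem_filter] at hm
      have hiS := Finset.mem_of_mem_erase hi
      refine Finset.mem_erase.mpr ⟨?_, hdc i hiS hj⟩
      rintro rfl
      exact hm.2 i hiS hj
    have hIH : ∀ m ∈ MaxS B S,
        k.factorial ≤ eS B (S.erase m) * ∏ i ∈ S.erase m, ((B i).card + 1) := by
      intro m hm
      have hmS : m ∈ S := Finset.mem_of_mem_filter m hm
      have := ih (S.erase m) (Finset.erase_ssubset hmS) (herase m hm)
      rwa [Finset.card_erase_of_mem hmS, hk, Nat.add_sub_cancel] at this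
    have hstep : S.card.factorial * S.card ≤ (eS B S * F) * S.card := by
      calc S.card.factorial * S.card
          ≤ S.card.factorial * ∑ m ∈ MaxS B S, ((B m).card + 1) :=
            Nat.mul_le_mul_left _ (sum_cover B h1 h2 S)
        _ = ∑ m ∈ MaxS B S, S.card.factorial * ((B m).card + 1) := Finset.mul_sum _ _ _
        _ = ∑ m ∈ MaxS B S, (k.factorial * ((B m).card + 1)) * S.card := by
            apply Finset.sum_congr rfl
            intro m _
            rw [hk, Nat.factorial_succ]
            ring
        _ ≤ ∑ m ∈ MaxS B S,
              ((eS B (S.erase m) * ∏ i ∈ S.erase m, ((B i).card + 1)) * ((B m).card + 1))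
                * S.card := by
            apply Finset.sum_le_sum
            intro m hm
            exact Nat.mul_le_mul_right _ (Nat.mul_le_mul_right _ (hIH m hm))
        _ = ∑ m ∈ MaxS B S, (eS B (S.erase m) * F) * S.card := by
            apply Finset.sum_congr rfl
            intro m hm
            have hmS : m ∈ S := Finset.mem_of_mem_filter m hm
            rw [hF, mul_assoc (eS B (S.erase m)), Finset.prod_erase_mul _ _ hmS]
        _ = (∑ m ∈ MaxS B S, eS B (S.erase m)) * F * S.card := by
            rw [← Finset.sum_mul, ← Finset.sum_mul]
        _ = (eS B S * F) * S.card := by rw [← card_decomp B h1 S hS]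
    exact Nat.le_of_mul_le_mul_right hstep (Finset.card_pos.mpr hS)

end CountPermsAux

open CountPermsAux in
/-- If the sets `B₁, …, B_n ⊆ [n]` satisfy `i ∉ B_i` and the transitivity property
`i ∈ B_j, j ∈ B_k ⟹ i ∈ B_k`, then the number of permutations `π` with
`π⁻¹(j) < π⁻¹(i)` for all `i` and all `j ∈ B_i` is at least `n! / ∏ (|B_i| + 1)`. -/
theorem count_perms_above_ideals (n : ℕ) (B : Fin n → Finset (Fin n))
    (h1 : ∀ i, i ∉ B i)
    (h2 : ∀ i j k : Fin n, i ∈ B j → j ∈ B k → i ∈ B k) :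
    Nat.factorial n ≤
      Nat.card {π : Equiv.Perm (Fin n) // ∀ i : Fin n, ∀ j ∈ B i, π⁻¹ j < π⁻¹ i} *
        ∏ i : Fin n, ((B i).card + 1) := by
  classical
  have hmain := CountPermsAux.main B h1 h2 Finset.univ (fun i _ => Finset.subset_univ _)
  rw [Finset.card_univ, Fintype.card_fin] at hmain
  have hlen : ∀ l : {l : List (Fin n) // GoodL B Finset.univ l},
      l.1.reverse.length = n := by
    intro l
    rw [List.length_reverse]
    have h := List.toFinset_card_of_nodup l.2.nodup
    rw [l.2.1, Finset.card_univ, Fintype.card_fin] at h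
    exact h.symm
  let g : {l : List (Fin n) // GoodL B Finset.univ l} → (Fin n → Fin n) :=
    fun l i => l.1.reverse.get (Fin.cast (hlen l).symm i)
  have ginj : ∀ l, Function.Injective (g l) := by
    intro l a b hab
    have h := List.nodup_iff_injective_get.mp (List.nodup_reverse.mpr l.2.nodup) hab
    exact Fin.ext (show a.val = b.val by simpa using congrArg Fin.val h)
  let π : {l : List (Fin n) // GoodL B Finset.univ l} → Equiv.Perm (Fin n) :=
    fun l => Equiv.ofBijective (g l) (Finite.injective_iff_bijective.mp (ginj l))
  have hπapp : ∀ l x, (π l) x = (g l) x := fun l x => rfl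
  have hcond : ∀ l, ∀ i : Fin n, ∀ j ∈ B i, (π l)⁻¹ j < (π l)⁻¹ i := by
    intro l i j hj
    have hpw : l.1.reverse.Pairwise (fun a b => b ≠ a ∧ b ∉ B a) := by
      rw [List.pairwise_reverse]
      exact l.2.2
    have hji : (π l) ((π l)⁻¹ j) = j := Equiv.apply_symm_apply _ _
    have hii : (π l) ((π l)⁻¹ i) = i := Equiv.apply_symm_apply _ _
    by_contra hle
    rw [not_lt] at hle
    rcases eq_or_lt_of_le hle with heq | hlt
    · have : i = j := by rw [← hii, ← hji, heq]
      exact h1 i (this ▸ hj)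
    · have hget := List.pairwise_iff_get.mp hpw
        (Fin.cast (hlen l).symm ((π l)⁻¹ i)) (Fin.cast (hlen l).symm ((π l)⁻¹ j)) hlt
      have : j ∉ B i := by
        have h2' := hget.2
        rwa [show l.1.reverse.get (Fin.cast (hlen l).symm ((π l)⁻¹ j)) = j from hji,
          show l.1.reverse.get (Fin.cast (hlen l).symm ((π l)⁻¹ i)) = i from hii] at h2'
      exact this hj
  have hle : CountPermsAux.eS B Finset.univ ≤
      Nat.card {π : Equiv.Perm (Fin n) // ∀ i : Fin n, ∀ j ∈ B i, π⁻¹ j < π⁻¹ i} := by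
    apply Nat.card_le_card_of_injective
      (f := fun l => (⟨π l, hcond l⟩ :
        {π : Equiv.Perm (Fin n) // ∀ i : Fin n, ∀ j ∈ B i, π⁻¹ j < π⁻¹ i}))
    intro a b hab
    have hππ : π a = π b := by simpa using congrArg Subtype.val hab
    have hgg : g a = g b := by
      funext x
      rw [← hπapp a x, ← hπapp b x, hππ]
    have hrev : a.1.reverse = b.1.reverse := by
      apply List.ext_get (by rw [hlen a, hlen b])
      intro i hi1 hi2
      have hi : i < n := by rw [← hlen a]; exact hi1
      have := congrFun hgg ⟨i, hi⟩
      exact this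
    exact Subtype.ext (List.reverse_injective hrev)
  calc Nat.factorial n ≤ eS B Finset.univ * ∏ i : Fin n, ((B i).card + 1) := hmain
    _ ≤ Nat.card {π : Equiv.Perm (Fin n) // ∀ i : Fin n, ∀ j ∈ B i, π⁻¹ j < π⁻¹ i} *
        ∏ i : Fin n, ((B i).card + 1) := Nat.mul_le_mul_right _ hle
end

section
/- Let P be a partial order on a finite set of n elements (say on [n]). Then the number e(P) of linear extensions of P satisfies e(P) ≥ n! / ∏_{i ∈ P} d(i), where d(i) := #{j : j ≤ i in P}; equivalently, e(P) · ∏_{i ∈ P} d(i) ≥ n!. -/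
open Finset

private theorem lext_aux : ∀ (n : ℕ) (α : Type) [Fintype α] [PartialOrder α],
    Fintype.card α = n →
    n.factorial ≤ Nat.card {L : α ≃ Fin n // ∀ a b : α, a ≤ b → L a ≤ L b} *
      ∏ i : α, Nat.card {j : α // j ≤ i} := by
  intro n
  induction n with
  | zero =>
    intro α _ _ hcard
    have hE : IsEmpty α := Fintype.card_eq_zero_iff.mp hcard
    have hne : Nonempty {L : α ≃ Fin 0 // ∀ a b : α, a ≤ b → L a ≤ L b} :=
      ⟨⟨Equiv.equivOfIsEmpty α (Fin 0), fun a => isEmptyElim a⟩⟩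
    have h1 : 0 < Nat.card {L : α ≃ Fin 0 // ∀ a b : α, a ≤ b → L a ≤ L b} := Nat.card_pos
    have h2 : ∏ i : α, Nat.card {j : α // j ≤ i} = 1 := by
      simp [Finset.univ_eq_empty]
    rw [h2, mul_one, Nat.factorial_zero]
    exact h1
  | succ n ih =>
    intro α _ _ hcard
    classical
    set d : α → ℕ := fun i => Nat.card {j : α // j ≤ i} with hd
    set fib : α → ℕ := fun m =>
      Nat.card {L' : {x : α // x ≠ m} ≃ Fin n // ∀ a b, a ≤ b → L' a ≤ L' b} with hfib
    set mx : α → Prop := fun m => ∀ c, m ≤ c → c = m with hmx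
    set Mset : Finset α := univ.filter mx with hMset
    -- every element lies below a maximal one
    have hexists : ∀ a : α, ∃ m, mx m ∧ a ≤ m := by
      intro a
      obtain ⟨b, hab, hb⟩ := Finite.exists_le_maximal (a := a) (p := fun _ => True) trivial
      exact ⟨b, fun c hbc => le_antisymm (hb.2 trivial hbc) hbc, hab⟩
    -- (4) sum of d over maximal elements
    have hsum : n + 1 ≤ ∑ m ∈ Mset, d m := by
      have cover : (univ : Finset α) ⊆ Mset.biUnion (fun m => univ.filter (· ≤ m)) := by
        intro a _
        obtain ⟨m, hm, ham⟩ := hexists a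
        simp only [mem_biUnion, mem_filter, mem_univ, true_and, hMset]
        exact ⟨m, hm, ham⟩
      calc n + 1 = (univ : Finset α).card := by rw [Finset.card_univ, hcard]
        _ ≤ (Mset.biUnion (fun m => univ.filter (· ≤ m))).card := Finset.card_le_card cover
        _ ≤ ∑ m ∈ Mset, (univ.filter (· ≤ m)).card := Finset.card_biUnion_le
        _ = ∑ m ∈ Mset, d m := by
            refine Finset.sum_congr rfl fun m _ => ?_
            show _ = Nat.card {j : α // j ≤ m}
            rw [Nat.card_eq_fintype_card, Fintype.card_subtype]
    -- (3) splitting the product at a maximal element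
    have hprod : ∀ m, mx m → (∏ i : α, d i) = d m * ∏ i ∈ ({m}ᶜ : Finset α), d i :=
      fun m _ => Fintype.prod_eq_mul_prod_compl m d
    -- (2) the compl product equals the product over the subtype
    have hprod2 : ∀ m : α, (∏ i ∈ ({m}ᶜ : Finset α), d i)
        = ∏ i : {x : α // x ≠ m}, d i.1 := by
      intro m
      exact Finset.prod_subtype _ (by simp) _
    -- downsets in the subtype poset are the same as in α, for maximal m
    have hdown : ∀ m, mx m → ∀ i : {x : α // x ≠ m},
        Nat.card {j : {x : α // x ≠ m} // j ≤ i} = d i.1 := by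
      intro m hm i
      show _ = Nat.card {j : α // j ≤ i.1}
      refine Nat.card_congr ⟨fun j => ⟨j.1.1, j.2⟩, fun j => ⟨⟨j.1, ?_⟩, j.2⟩, ?_, ?_⟩
      · intro h
        apply i.2
        apply hm
        exact h.symm.trans_le j.2
      · intro j; rfl
      · intro j; rfl
    -- (IH applied to the subtype)
    have hIH : ∀ m, mx m → n.factorial ≤ fib m * ∏ i ∈ ({m}ᶜ : Finset α), d i := by
      intro m hm
      have hcard' : Fintype.card {x : α // x ≠ m} = n := by
        rw [Fintype.card_subtype_compl]
        simp [hcard]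
      have := ih {x : α // x ≠ m} hcard'
      rw [hprod2 m]
      calc n.factorial ≤ fib m * ∏ i : {x : α // x ≠ m},
            Nat.card {j : {x : α // x ≠ m} // j ≤ i} := this
        _ = fib m * ∏ i : {x : α // x ≠ m}, d i.1 := by
            congr 1
            exact Finset.prod_congr rfl fun i _ => hdown m hm i
    -- (1) injection from sigma into linear extensions
    have hkey : ∑ m ∈ Mset, fib m
        ≤ Nat.card {L : α ≃ Fin (n + 1) // ∀ a b : α, a ≤ b → L a ≤ L b} := by
      set F : (Σ m : {m : α // mx m},
          {L' : {x : α // x ≠ m.1} ≃ Fin n // ∀ a b, a ≤ b → L' a ≤ L' b}) →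
          {L : α ≃ Fin (n + 1) // ∀ a b : α, a ≤ b → L a ≤ L b} :=
        fun p => ⟨((Equiv.optionSubtypeNe p.1.1).symm.trans
            p.2.1.optionCongr).trans finSuccEquivLast.symm, by
          obtain ⟨⟨m, hm⟩, ⟨L', hL'⟩⟩ := p
          intro a b hab
          simp only [Equiv.trans_apply]
          by_cases hb : b = m
          · subst hb
            rw [Equiv.optionSubtypeNe_symm_self]
            simp only [Equiv.optionCongr_apply, Option.map_none, finSuccEquivLast_symm_none]
            exact Fin.le_last _
          · have ha : a ≠ m := by rintro rfl; exact hb (hm b hab)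
            rw [Equiv.optionSubtypeNe_symm_of_ne ha, Equiv.optionSubtypeNe_symm_of_ne hb]
            simp only [Equiv.optionCongr_apply, Option.map_some, finSuccEquivLast_symm_some]
            rw [Fin.castSucc_le_castSucc_iff]
            exact hL' ⟨a, ha⟩ ⟨b, hb⟩ hab⟩ with hF
      have hinj : Function.Injective F := by
        intro p q hpq
        obtain ⟨⟨m, hm⟩, ⟨L', hL'⟩⟩ := p
        obtain ⟨⟨m', hm'⟩, ⟨L'', hL''⟩⟩ := q
        have heq : ((Equiv.optionSubtypeNe m).symm.trans
            L'.optionCongr).trans finSuccEquivLast.symm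
            = ((Equiv.optionSubtypeNe m').symm.trans
            L''.optionCongr).trans finSuccEquivLast.symm := congrArg Subtype.val hpq
        have hmm : m = m' := by
          have h1 : ((Equiv.optionSubtypeNe m).symm.trans
              L'.optionCongr).trans finSuccEquivLast.symm m = Fin.last n := by
            simp [Equiv.optionSubtypeNe_symm_self]
          have h2 : ((Equiv.optionSubtypeNe m').symm.trans
              L''.optionCongr).trans finSuccEquivLast.symm m' = Fin.last n := by
            simp [Equiv.optionSubtypeNe_symm_self]
          have := h1.trans h2.symm
          rw [heq] at this
          exact (((Equiv.optionSubtypeNe m').symm.trans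
            L''.optionCongr).trans finSuccEquivLast.symm).injective this
        subst hmm
        have hLL : L' = L'' := by
          ext x
          have := DFunLike.congr_fun heq x.1
          simp only [Equiv.trans_apply, Equiv.optionSubtypeNe_symm_of_ne x.2,
            Equiv.optionCongr_apply, Option.map_some, finSuccEquivLast_symm_some] at this
          exact congrArg Fin.val (Fin.castSucc_injective n this)
        subst hLL
        rfl
      calc ∑ m ∈ Mset, fib m = ∑ m : {m : α // mx m}, fib m.1 := by
            exact Finset.sum_subtype _ (by simp [hMset]) _
        _ = Nat.card (Σ m : {m : α // mx m},
            {L' : {x : α // x ≠ m.1} ≃ Fin n // ∀ a b, a ≤ b → L' a ≤ L' b}) := by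
            rw [Nat.card_eq_fintype_card, Fintype.card_sigma]
            refine Finset.sum_congr rfl fun m _ => ?_
            show Nat.card _ = _
            rw [Nat.card_eq_fintype_card]
        _ ≤ _ := Nat.card_le_card_of_injective F hinj
    -- combine everything
    calc (n + 1).factorial = n.factorial * (n + 1) := by
          rw [Nat.factorial_succ]; ring
      _ ≤ n.factorial * ∑ m ∈ Mset, d m := Nat.mul_le_mul_left _ hsum
      _ = ∑ m ∈ Mset, n.factorial * d m := by rw [Finset.mul_sum]
      _ ≤ ∑ m ∈ Mset, (fib m * ∏ i ∈ ({m}ᶜ : Finset α), d i) * d m := by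
          refine Finset.sum_le_sum fun m hmem => ?_
          have hm : mx m := (Finset.mem_filter.mp hmem).2
          exact Nat.mul_le_mul_right _ (hIH m hm)
      _ = ∑ m ∈ Mset, fib m * ∏ i : α, d i := by
          refine Finset.sum_congr rfl fun m hmem => ?_
          have hm : mx m := (Finset.mem_filter.mp hmem).2
          rw [hprod m hm]; ring
      _ = (∑ m ∈ Mset, fib m) * ∏ i : α, d i := by rw [Finset.sum_mul]
      _ ≤ _ := Nat.mul_le_mul_right _ hkey

/-- For any partial order `P` on a set of `n` elements, the number `e(P)` of linear
extensions of `P` satisfies `e(P) ≥ n! / ∏_{i} d(i)`, where `d(i) = #{j : j ≤ i in P}`. -/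
theorem linear_extensions_lower_bound (n : ℕ) (P : PartialOrder (Fin n)) :
    Nat.factorial n ≤
      Nat.card {L : Equiv.Perm (Fin n) // ∀ a b : Fin n, P.le a b → L a ≤ L b} *
        ∏ i : Fin n, Nat.card {j : Fin n // P.le j i} := by
  exact @lext_aux n (Fin n) _ P (Fintype.card_fin n)
end

section
/- Let σ ∈ S_n. Then the number of permutations π ∈ S_n with π ⪯ σ in the weak Bruhat order equals e(P(σ)), the number of linear extensions of the poset P(σ) induced by σ. -/
/-- inversion set (as pairs of values). -/
def invSet {n : ℕ} (σ : Equiv.Perm (Fin n)) : Finset (Fin n × Fin n) :=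
  Finset.univ.filter (fun p => p.1 < p.2 ∧ σ⁻¹ p.2 < σ⁻¹ p.1)

lemma mem_invSet {n} {σ : Equiv.Perm (Fin n)} {x y : Fin n} :
    (x, y) ∈ invSet σ ↔ x < y ∧ σ⁻¹ y < σ⁻¹ x := by
  simp [invSet]

/-- swapping two adjacent positions: if the images are in (strict) order then so were the
originals, unless the pair is exactly `(i, j)`. -/
lemma swap_adj_lt {n : ℕ} {i j p q : Fin n} (hij : (i : ℕ) + 1 = (j : ℕ))
    (hne : ¬(p = i ∧ q = j))
    (h : Equiv.swap i j q < Equiv.swap i j p) : q < p := by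
  have hijne : i ≠ j := Fin.ne_of_val_ne (by omega)
  have hv : ∀ a b : Fin n, a ≠ b → a.val ≠ b.val := fun a b hab hh => hab (Fin.ext hh)
  rw [Fin.lt_def] at h ⊢
  rcases eq_or_ne p i with rfl | hpi
  · rcases eq_or_ne q p with rfl | hqi
    · simp at h
    · rcases eq_or_ne q j with rfl | hqj
      · exact absurd ⟨rfl, rfl⟩ hne
      · rw [Equiv.swap_apply_left, Equiv.swap_apply_of_ne_of_ne hqi hqj] at h
        have h1 := hv _ _ hqi
        omega
  · rcases eq_or_ne p j with rfl | hpj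
    · rcases eq_or_ne q i with rfl | hqi
      · rw [Equiv.swap_apply_right, Equiv.swap_apply_left] at h
        omega
      · rcases eq_or_ne q p with rfl | hqj
        · simp at h
        · rw [Equiv.swap_apply_right, Equiv.swap_apply_of_ne_of_ne hqi hqj] at h
          omega
    · rcases eq_or_ne q i with rfl | hqi
      · rw [Equiv.swap_apply_left, Equiv.swap_apply_of_ne_of_ne hpi hpj] at h
        omega
      · rcases eq_or_ne q j with rfl | hqj
        · rw [Equiv.swap_apply_right, Equiv.swap_apply_of_ne_of_ne hpi hpj] at h
          have h1 := hv _ _ hpj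
          omega
        · rwa [Equiv.swap_apply_of_ne_of_ne hpi hpj,
            Equiv.swap_apply_of_ne_of_ne hqi hqj] at h

/-- a simple reduction shrinks the inversion set. -/
lemma invSet_subset_of_step {n : ℕ} {ω₁ ω₂ : Equiv.Perm (Fin n)}
    (h : IsSimpleReduction ω₁ ω₂) : invSet ω₂ ⊆ invSet ω₁ := by
  obtain ⟨i, j, hij, hlt, rfl⟩ := h
  rintro ⟨x, y⟩ hxy
  rw [mem_invSet] at hxy ⊢
  obtain ⟨hxy1, hxy2⟩ := hxy
  refine ⟨hxy1, ?_⟩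
  rw [mul_inv_rev, Equiv.swap_inv] at hxy2
  simp only [Equiv.Perm.mul_apply] at hxy2
  refine swap_adj_lt hij ?_ hxy2
  rintro ⟨hp, hq⟩
  have hx : x = ω₁ i := by rw [← hp]; simp
  have hy : y = ω₁ j := by rw [← hq]; simp
  rw [hx, hy] at hxy1
  exact absurd hxy1 (not_lt.2 hlt.le)

lemma invSet_subset_of_weakLE {n : ℕ} {π σ : Equiv.Perm (Fin n)}
    (h : WeakLE π σ) : invSet π ⊆ invSet σ := by
  induction h with
  | refl => exact subset_rfl
  | tail _ hstep ih => exact (invSet_subset_of_step hstep).trans ih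

lemma val_inv_eq_card {n} (σ : Equiv.Perm (Fin n)) (a : Fin n) :
    ((σ⁻¹ a : Fin n) : ℕ) = (Finset.univ.filter fun b => σ⁻¹ b < σ⁻¹ a).card := by
  have he : (Finset.univ.filter fun b => σ⁻¹ b < σ⁻¹ a) = (Finset.Iio (σ⁻¹ a)).image σ := by
    ext b
    simp only [Finset.mem_filter, Finset.mem_univ, true_and, Finset.mem_image, Finset.mem_Iio]
    constructor
    · intro h; exact ⟨σ⁻¹ b, h, by simp⟩
    · rintro ⟨c, hc, rfl⟩; simpa using hc
  rw [he, Finset.card_image_of_injective _ σ.injective, Fin.card_Iio]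

/-- the inversion set determines the permutation. -/
lemma invSet_injective {n} {π σ : Equiv.Perm (Fin n)} (h : invSet π = invSet σ) : π = σ := by
  have key : ∀ a b : Fin n, (π⁻¹ b < π⁻¹ a ↔ σ⁻¹ b < σ⁻¹ a) := by
    intro a b
    rcases lt_trichotomy b a with hb | rfl | hb
    · have hπ : (b, a) ∈ invSet π ↔ (b, a) ∈ invSet σ := by rw [h]
      rw [mem_invSet, mem_invSet] at hπ
      have hbπ : π⁻¹ b ≠ π⁻¹ a := fun hh => (hb.ne (π⁻¹.injective hh)).elim
      have hbσ : σ⁻¹ b ≠ σ⁻¹ a := fun hh => (hb.ne (σ⁻¹.injective hh)).elim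
      constructor
      · intro hlt
        rcases lt_or_gt_of_ne hbσ with h1 | h1
        · exact h1
        · exact absurd (hπ.2 ⟨hb, h1⟩).2 (not_lt.2 hlt.le)
      · intro hlt
        rcases lt_or_gt_of_ne hbπ with h1 | h1
        · exact h1
        · exact absurd (hπ.1 ⟨hb, h1⟩).2 (not_lt.2 hlt.le)
    · simp
    · have hπ : (a, b) ∈ invSet π ↔ (a, b) ∈ invSet σ := by rw [h]
      rw [mem_invSet, mem_invSet] at hπ
      constructor
      · intro hlt; exact (hπ.1 ⟨hb, hlt⟩).2
      · intro hlt; exact (hπ.2 ⟨hb, hlt⟩).2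
  have hinv : ∀ a, π⁻¹ a = σ⁻¹ a := by
    intro a
    have h1 : ((π⁻¹ a : Fin n) : ℕ) = ((σ⁻¹ a : Fin n) : ℕ) := by
      rw [val_inv_eq_card, val_inv_eq_card]
      congr 1
      ext b
      simp only [Finset.mem_filter, Finset.mem_univ, true_and]
      exact key a b
    exact Fin.ext h1
  have : π⁻¹ = σ⁻¹ := Equiv.ext hinv
  simpa using congrArg Inv.inv this

lemma weakLE_of_invSet_subset {n : ℕ} :
    ∀ N (σ π : Equiv.Perm (Fin n)), (invSet σ).card ≤ N →
      invSet π ⊆ invSet σ → WeakLE π σ := by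
  intro N
  induction N with
  | zero =>
    intro σ π hcard hsub
    have h0 : invSet σ = ∅ := Finset.card_eq_zero.1 (Nat.le_zero.1 hcard)
    have h1 : invSet π = invSet σ := by
      rw [h0] at hsub ⊢
      exact Finset.subset_empty.1 hsub
    rw [invSet_injective h1]
    exact Relation.ReflTransGen.refl
  | succ N ih =>
    intro σ π hcard hsub
    by_cases heq : invSet π = invSet σ
    · rw [invSet_injective heq]; exact Relation.ReflTransGen.refl
    · have hss : invSet π ⊂ invSet σ := ⟨hsub, fun h2 => heq (le_antisymm hsub h2)⟩
      obtain ⟨u, huσ, huπ⟩ := Finset.exists_of_ssubset hss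
      -- minimize position distance over S = invSet σ \ invSet π
      have hS : ((invSet σ) \ (invSet π)).Nonempty :=
        ⟨u, Finset.mem_sdiff.2 ⟨huσ, huπ⟩⟩
      obtain ⟨ab, habS, hmin⟩ := Finset.exists_min_image _
        (fun p : Fin n × Fin n => (σ⁻¹ p.1 : ℕ) - (σ⁻¹ p.2 : ℕ)) hS
      obtain ⟨a, b⟩ := ab
      rw [Finset.mem_sdiff] at habS
      obtain ⟨habσ, habπ⟩ := habS
      rw [mem_invSet] at habσ
      obtain ⟨hab, hba⟩ := habσ
      set p := σ⁻¹ b with hp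
      set q := σ⁻¹ a with hq
      -- claim: q = p + 1
      have hadj : (p : ℕ) + 1 = (q : ℕ) := by
        by_contra hnad
        have hpq : (p : ℕ) + 1 < (q : ℕ) := by
          have := Fin.lt_def.1 hba; omega
        have hk1 : (p : ℕ) + 1 < n := lt_trans hpq q.isLt
        set k : Fin n := ⟨(p : ℕ) + 1, hk1⟩ with hk
        set c : Fin n := σ k with hc
        have hck : σ⁻¹ c = k := by simp [hc]
        have hca : c ≠ a := by
          intro hh
          have : σ⁻¹ c = σ⁻¹ a := by rw [hh]
          rw [hck, ← hq] at this
          have := congrArg Fin.val this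
          simp [hk] at this
          omega
        have hcb : c ≠ b := by
          intro hh
          have : σ⁻¹ c = σ⁻¹ b := by rw [hh]
          rw [hck, ← hp] at this
          have := congrArg Fin.val this
          simp [hk] at this
        -- helper: memberships in invSet π from minimality
        have habπ' : ¬ (π⁻¹ b < π⁻¹ a) := by
          intro hh; exact habπ (mem_invSet.2 ⟨hab, hh⟩)
        have hmin' : ∀ x y : Fin n, x < y → σ⁻¹ y < σ⁻¹ x →
            (σ⁻¹ x : ℕ) - (σ⁻¹ y : ℕ) < (q : ℕ) - (p : ℕ) → π⁻¹ y < π⁻¹ x := by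
          intro x y hxy hyx hd
          by_contra hnot
          have hmem : (x, y) ∈ (invSet σ) \ (invSet π) := by
            rw [Finset.mem_sdiff, mem_invSet, mem_invSet]
            exact ⟨⟨hxy, hyx⟩, fun hh => hnot hh.2⟩
          have := hmin (x, y) hmem
          simp only at this
          omega
        rcases lt_trichotomy c a with hlt1 | heq1 | hlt1
        · -- c < a: (c,b) ∈ invSet π, (c,a) not inversion of σ
          have h1 : π⁻¹ b < π⁻¹ c := by
            refine hmin' c b (lt_trans hlt1 hab) ?_ ?_
            · rw [hck, ← hp, Fin.lt_def]; simp [hk]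
            · rw [hck, ← hp]
              simp [hk]
              have := Fin.lt_def.1 hba; omega
          have h2 : π⁻¹ c < π⁻¹ a := by
            have hnσ : ¬ (σ⁻¹ a < σ⁻¹ c) := by
              rw [hck, ← hq, Fin.lt_def]
              simp [hk]
              omega
            have hnπ : (c, a) ∉ invSet π := fun hh => hnσ (mem_invSet.1 (hsub hh)).2
            rw [mem_invSet] at hnπ
            push_neg at hnπ
            have := hnπ hlt1
            rcases lt_or_gt_of_ne (fun hh : π⁻¹ c = π⁻¹ a => hca (π⁻¹.injective hh)) with h3 | h3
            · exact h3
            · exact absurd h3 (not_lt.2 this)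
          exact habπ' (lt_trans h1 h2)
        · exact hca heq1
        · rcases lt_trichotomy c b with hlt2 | heq2 | hlt2
          · -- a < c < b
            have h1 : π⁻¹ c < π⁻¹ a := by
              refine hmin' a c hlt1 ?_ ?_
              · rw [hck, ← hq, Fin.lt_def]; simp [hk]; omega
              · rw [hck, ← hq]; simp [hk]; omega
            have h2 : π⁻¹ b < π⁻¹ c := by
              refine hmin' c b hlt2 ?_ ?_
              · rw [hck, ← hp, Fin.lt_def]; simp [hk]
              · rw [hck, ← hp]; simp [hk]; have := Fin.lt_def.1 hba; omega
            exact habπ' (lt_trans h2 h1)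
          · exact hcb heq2
          · -- b < c
            have h1 : π⁻¹ c < π⁻¹ a := by
              refine hmin' a c hlt1 ?_ ?_
              · rw [hck, ← hq, Fin.lt_def]; simp [hk]; omega
              · rw [hck, ← hq]; simp [hk]; omega
            have h2 : π⁻¹ b < π⁻¹ c := by
              have hnσ : ¬ (σ⁻¹ c < σ⁻¹ b) := by
                rw [hck, ← hp, Fin.lt_def]; simp [hk]
              have hnπ : (b, c) ∉ invSet π := fun hh => hnσ (mem_invSet.1 (hsub hh)).2
              rw [mem_invSet] at hnπ
              push_neg at hnπ
              have := hnπ hlt2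
              rcases lt_or_gt_of_ne (fun hh : π⁻¹ b = π⁻¹ c => hcb.symm (π⁻¹.injective hh)) with h3 | h3
              · exact h3
              · exact absurd h3 (not_lt.2 this)
            exact habπ' (lt_trans h2 h1)
      -- now build σ' and recurse
      set σ' : Equiv.Perm (Fin n) := σ * Equiv.swap p q with hσ'
      have hstep : IsSimpleReduction σ σ' := by
        refine ⟨p, q, hadj, ?_, rfl⟩
        have h1 : σ q = a := by rw [hq]; simp
        have h2 : σ p = b := by rw [hp]; simp
        rw [h1, h2]; exact hab
      have hinv' : ∀ x : Fin n, σ'⁻¹ x = Equiv.swap p q (σ⁻¹ x) := by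
        intro x
        rw [hσ', mul_inv_rev, Equiv.swap_inv]
        simp
      have hsub' : invSet π ⊆ invSet σ' := by
        rintro ⟨x, y⟩ hxy
        have hxyσ := hsub hxy
        rw [mem_invSet] at hxy hxyσ ⊢
        refine ⟨hxy.1, ?_⟩
        rw [hinv', hinv']
        -- use swap_adj_lt via involutivity
        by_contra hnot
        have hne2 : Equiv.swap p q (σ⁻¹ y) ≠ Equiv.swap p q (σ⁻¹ x) := by
          intro hh
          have := (Equiv.swap p q).injective hh
          exact absurd (congrArg σ this) (by
            simp only [← Equiv.Perm.mul_apply, mul_inv_cancel, Equiv.Perm.one_apply]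
            exact fun hh2 => hxy.1.ne hh2.symm)
        have hgt : Equiv.swap p q (σ⁻¹ x) < Equiv.swap p q (σ⁻¹ y) :=
          (lt_or_gt_of_ne hne2).resolve_left hnot
        -- apply swap_adj_lt with roles: conclude σ⁻¹ x < σ⁻¹ y, contradiction
        have : σ⁻¹ x < σ⁻¹ y := by
          refine swap_adj_lt hadj ?_ hgt
          rintro ⟨h1, h2⟩
          -- σ⁻¹ y = p, σ⁻¹ x = q → y = b, x = a → (x,y) = (a,b) ∈ invSet π, contra
          have hyb : y = b := by
            have := congrArg σ h1; simpa [hp] using this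
          have hxa : x = a := by
            have := congrArg σ h2; simpa [hq] using this
          rw [hxa, hyb] at hxy
          exact habπ (mem_invSet.2 hxy)
        exact absurd hxyσ.2 (not_lt.2 this.le)
      have hssub : invSet σ' ⊂ invSet σ := by
        refine ⟨invSet_subset_of_step hstep, ?_⟩
        intro hcon
        have habσ' : (a, b) ∈ invSet σ' := hcon (mem_invSet.2 ⟨hab, hba⟩)
        rw [mem_invSet] at habσ'
        have h1 : σ'⁻¹ a = p := by rw [hinv', ← hq, Equiv.swap_apply_right]
        have h2 : σ'⁻¹ b = q := by rw [hinv', ← hp, Equiv.swap_apply_left]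
        rw [h1, h2] at habσ'
        exact absurd habσ'.2 (not_lt.2 hba.le)
      have hcard' : (invSet σ').card ≤ N := by
        have := Finset.card_lt_card hssub
        omega
      exact Relation.ReflTransGen.head hstep (ih σ' π hcard' hsub')

lemma weakLE_iff_invSet_subset {n : ℕ} {π σ : Equiv.Perm (Fin n)} :
    WeakLE π σ ↔ invSet π ⊆ invSet σ :=
  ⟨invSet_subset_of_weakLE, weakLE_of_invSet_subset (invSet σ).card σ π le_rfl⟩


/-- The number of `π ⪯ σ` equals `e(P(σ))`, the number of linear extensions of the
poset `P(σ)` induced by `σ`, in which `i < j` iff `(i,j)` is a non-inversion of `σ`. -/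
theorem weak_bruhat_count_eq_linear_extensions (n : ℕ) (σ : Equiv.Perm (Fin n)) :
    Nat.card {π : Equiv.Perm (Fin n) // WeakLE π σ} =
      Nat.card {L : Equiv.Perm (Fin n) //
        ∀ i j : Fin n, i < j → σ⁻¹ i < σ⁻¹ j → L i < L j} := by
  refine Nat.card_congr (Equiv.subtypeEquiv (Equiv.inv (Equiv.Perm (Fin n))) ?_)
  intro π
  simp only [Equiv.inv_apply]
  rw [weakLE_iff_invSet_subset]
  constructor
  · intro hsub i j hij hσ
    rcases lt_or_gt_of_ne (fun hh : π⁻¹ i = π⁻¹ j => hij.ne (π⁻¹.injective hh)) with h1 | h1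
    · exact h1
    · have := (mem_invSet.1 (hsub (mem_invSet.2 ⟨hij, h1⟩))).2
      exact absurd hσ (not_lt.2 this.le)
  · intro hL
    rintro ⟨x, y⟩ hxy
    rw [mem_invSet] at hxy ⊢
    refine ⟨hxy.1, ?_⟩
    by_contra hnot
    have hne : σ⁻¹ x ≠ σ⁻¹ y := fun hh => hxy.1.ne (σ⁻¹.injective hh)
    have : σ⁻¹ x < σ⁻¹ y := (lt_or_gt_of_ne hne).resolve_right hnot
    exact absurd hxy.2 (not_lt.2 (hL x y hxy.1 this).le)
end
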